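/- arXiv:2312.12992 — 6 statements merged into one kernel-verified Lean document; each statement's English description precedes it below -/
import Mathlib

section
/- For all integers m ≥ 1 and n ≥ 1, the (mn)-th Chebyshev norm of the star E_m equals 2; that is, inf{ sup_{z ∈ E_m} |P(z)| : P ∈ ℂ[X] monic of degree mn } = 2. -/
/-- The `n`-th Chebyshev norm of a set `E ⊆ ℂ`:
`t_n(E) = inf { sup_{z ∈ E} |P(z)| : P monic of degree n }`. -/
noncomputable def chebNorm (E : Set ℂ) (n : ℕ) : ℝ :=
  sInf { r : ℝ | ∃ P : Polynomial ℂ, P.Monic ∧ P.natDegree = n ∧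
    r = ⨆ z ∈ E, ‖P.eval z‖ }

/-- The star `E_m = { z ∈ ℂ : z^m ∈ [-2, 2] }`. -/
def Estar (m : ℕ) : Set ℂ := { z : ℂ | ∃ x ∈ Set.Icc (-2 : ℝ) 2, (x : ℂ) = z ^ m }

open Polynomial Finset

/-- Monic Chebyshev-like polynomials on `[-2,2]`: `cheb k (2 cos θ) = 2 cos (k θ)`. -/
noncomputable def cheb : ℕ → Polynomial ℝ
  | 0 => Polynomial.C 2
  | 1 => Polynomial.X
  | (k+2) => Polynomial.X * cheb (k+1) - cheb k

lemma cheb_eval_cos : ∀ (k : ℕ) (θ : ℝ), (cheb k).eval (2 * Real.cos θ) = 2 * Real.cos (k * θ)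
  | 0, θ => by simp [cheb]
  | 1, θ => by simp [cheb]
  | (k+2), θ => by
    have h1 := cheb_eval_cos (k+1) θ
    have h0 := cheb_eval_cos k θ
    have key := Real.cos_add_cos ((k+2) * θ) (k * θ)
    have e1 : (((k:ℝ)+2) * θ + (k:ℝ) * θ) / 2 = ((k:ℝ)+1) * θ := by ring
    have e2 : (((k:ℝ)+2) * θ - (k:ℝ) * θ) / 2 = θ := by ring
    rw [e1, e2] at key
    simp only [cheb, eval_sub, eval_mul, eval_X, h1, h0]
    push_cast
    push_cast at key
    nlinarith [key]

lemma cheb_deg : ∀ k : ℕ, (cheb (k+1)).Monic ∧ (cheb k).degree = k ∧ (cheb (k+1)).degree = k+1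
  | 0 => by
    refine ⟨monic_X, ?_, ?_⟩ <;> simp [cheb]
  | (k+1) => by
    obtain ⟨h1, h0, hd1⟩ := cheb_deg k
    have hXdeg : (Polynomial.X * cheb (k+1)).degree = ((k : WithBot ℕ) + 2) := by
      rw [degree_mul, degree_X, hd1]
      ring
    have hlt : (cheb k).degree < (Polynomial.X * cheb (k+1)).degree := by
      rw [hXdeg, h0]
      exact_mod_cast (by omega : (k:ℕ) < k+2)
    have hmon : (Polynomial.X * cheb (k+1)).Monic := monic_X.mul h1
    have hsub : (Polynomial.X * cheb (k+1) - cheb k).Monic := hmon.sub_of_left hlt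
    have hsubdeg : (Polynomial.X * cheb (k+1) - cheb k).degree = ((k : WithBot ℕ) + 2) := by
      rw [degree_sub_eq_left_of_degree_lt hlt, hXdeg]
    refine ⟨?_, hd1, ?_⟩
    · show (Polynomial.X * cheb (k+1) - cheb k).Monic
      exact hsub
    · show (Polynomial.X * cheb (k+1) - cheb k).degree = ((k:ℕ) + 1 : WithBot ℕ) + 1
      rw [hsubdeg]
      push_cast
      ring

lemma cheb_monic {k : ℕ} (hk : 1 ≤ k) : (cheb k).Monic := by
  obtain ⟨j, rfl⟩ := Nat.exists_eq_add_of_le' hk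
  exact (cheb_deg j).1

lemma cheb_natDegree (k : ℕ) : (cheb k).natDegree = k :=
  natDegree_eq_of_degree_eq_some (cheb_deg k).2.1

lemma cheb_bound {k : ℕ} {x : ℝ} (hx : x ∈ Set.Icc (-2:ℝ) 2) : |(cheb k).eval x| ≤ 2 := by
  have h1 : -1 ≤ x/2 := by linarith [hx.1]
  have h2 : x/2 ≤ 1 := by linarith [hx.2]
  have : x = 2 * Real.cos (Real.arccos (x/2)) := by
    rw [Real.cos_arccos h1 h2]; ring
  rw [this, cheb_eval_cos]
  calc |2 * Real.cos (k * Real.arccos (x/2))| = 2 * |Real.cos (k * Real.arccos (x/2))| := by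
        rw [abs_mul]; norm_num
    _ ≤ 2 * 1 := by have := Real.abs_cos_le_one (k * Real.arccos (x/2)); linarith
    _ = 2 := by norm_num

lemma cos_nat_pi (k : ℕ) : Real.cos (k * Real.pi) = (-1:ℝ)^k := by
  induction k with
  | zero => simp
  | succ j ih =>
    have : ((j:ℝ)+1) * Real.pi = j * Real.pi + Real.pi := by ring
    push_cast
    rw [this, Real.cos_add_pi, ih, pow_succ]
    ring

lemma interval_lb {n : ℕ} (hn : 1 ≤ n) (R : Polynomial ℝ) (hRmon : R.Monic)
    (hRdeg : R.natDegree = n) {S : ℝ} (hS : ∀ x ∈ Set.Icc (-2:ℝ) 2, |R.eval x| ≤ S) :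
    2 ≤ S := by
  by_contra hc
  push_neg at hc
  set C := cheb n with hC
  set D := C - R with hD
  set g : ℕ → ℝ := fun k => 2 * Real.cos (k * Real.pi / n) with hg
  have hnR : (0:ℝ) < n := by exact_mod_cast hn
  -- g values are in [-2,2]
  have hgmem : ∀ k : ℕ, g k ∈ Set.Icc (-2:ℝ) 2 := by
    intro k
    have h1 := Real.neg_one_le_cos (k * Real.pi / n)
    have h2 := Real.cos_le_one (k * Real.pi / n)
    constructor <;> simp only [hg] <;> linarith
  -- monotonicity of g
  have hgantistrict : ∀ {a b : ℕ}, a < b → b ≤ n → g b < g a := by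
    intro a b hab hbn
    have hpi := Real.pi_pos
    have ha0 : (0:ℝ) ≤ (a:ℝ) * Real.pi / n := by positivity
    have hb0 : (0:ℝ) ≤ (b:ℝ) * Real.pi / n := by positivity
    have han' : (a:ℝ) * Real.pi / n ≤ Real.pi := by
      rw [div_le_iff₀ hnR]
      have : (a:ℝ) ≤ n := by exact_mod_cast (le_of_lt (lt_of_lt_of_le hab hbn))
      nlinarith
    have hbn' : (b:ℝ) * Real.pi / n ≤ Real.pi := by
      rw [div_le_iff₀ hnR]
      have : (b:ℝ) ≤ n := by exact_mod_cast hbn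
      nlinarith
    have hab' : (a:ℝ) * Real.pi / n < (b:ℝ) * Real.pi / n := by
      have hab2 : (a:ℝ) < b := by exact_mod_cast hab
      gcongr
    have := Real.strictAntiOn_cos ⟨ha0, han'⟩ ⟨hb0, hbn'⟩ hab'
    simp only [hg]
    linarith
  have hganti : ∀ {a b : ℕ}, a ≤ b → b ≤ n → g b ≤ g a := by
    intro a b hab hbn
    rcases eq_or_lt_of_le hab with h | h
    · rw [h]
    · exact le_of_lt (hgantistrict h hbn)
  -- D basics
  have hCdeg : C.degree = (n : WithBot ℕ) := by
    rw [hC, degree_eq_natDegree (cheb_monic hn).ne_zero, cheb_natDegree]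
  have hRdeg' : R.degree = (n : WithBot ℕ) := by
    rw [degree_eq_natDegree hRmon.ne_zero, hRdeg]
  have hDdeglt : D.degree < (n : WithBot ℕ) := by
    rw [hD, ← hCdeg]
    exact degree_sub_lt (hCdeg.trans hRdeg'.symm) (cheb_monic hn).ne_zero
      ((cheb_monic hn).leadingCoeff.trans hRmon.leadingCoeff.symm)
  -- sign of D at the points g k
  have hCval : ∀ k : ℕ, C.eval (g k) = 2 * (-1:ℝ)^k := by
    intro k
    have : C.eval (g k) = 2 * Real.cos (n * ((k:ℝ) * Real.pi / n)) := cheb_eval_cos n _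
    rw [this]
    have harg : (n:ℝ) * ((k:ℝ) * Real.pi / n) = (k:ℝ) * Real.pi := by
      field_simp
    rw [harg, cos_nat_pi]
  have hsign : ∀ k : ℕ, 0 < (-1:ℝ)^k * D.eval (g k) := by
    intro k
    have h1 : D.eval (g k) = 2 * (-1:ℝ)^k - R.eval (g k) := by
      rw [hD, eval_sub, hCval]
    have h2 : |R.eval (g k)| ≤ S := hS _ (hgmem k)
    have h3 := abs_le.mp h2
    rcases Nat.even_or_odd k with he | ho
    · rw [he.neg_one_pow]
      rw [he.neg_one_pow] at h1
      nlinarith [h3.1, h3.2]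
    · rw [ho.neg_one_pow]
      rw [ho.neg_one_pow] at h1
      nlinarith [h3.1, h3.2]
  -- D is nonzero
  have hD0 : D ≠ 0 := by
    intro h
    have := hsign 0
    rw [h] at this
    simp at this
  have hDnat : D.natDegree < n := (natDegree_lt_iff_degree_lt hD0).mpr hDdeglt
  -- roots between consecutive points
  have hroots : ∀ k : Fin n, ∃ y, y ∈ Set.Ioo (g (k+1)) (g k) ∧ D.eval y = 0 := by
    intro ⟨k, hk⟩
    simp only
    have hle : g (k+1) ≤ g k := hganti (Nat.le_succ k) hk
    have hcont : ContinuousOn (fun x => D.eval x) (Set.Icc (g (k+1)) (g k)) :=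
      (Polynomial.continuous D).continuousOn
    have hsk := hsign k
    have hsk1 := hsign (k+1)
    rcases Nat.even_or_odd k with he | ho
    · -- D (g (k+1)) < 0 < D (g k)
      have h1 : 0 < D.eval (g k) := by rw [he.neg_one_pow] at hsk; linarith
      have h2 : D.eval (g (k+1)) < 0 := by
        have ho1 : Odd (k+1) := Even.add_one he
        rw [ho1.neg_one_pow] at hsk1; linarith
      have := intermediate_value_Ioo hle hcont (a := g (k+1)) (b := g k)
      have h0 : (0:ℝ) ∈ Set.Ioo (D.eval (g (k+1))) (D.eval (g k)) := ⟨h2, h1⟩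
      obtain ⟨y, hy, hy0⟩ := this h0
      exact ⟨y, hy, hy0⟩
    · have h1 : D.eval (g k) < 0 := by rw [ho.neg_one_pow] at hsk; linarith
      have h2 : 0 < D.eval (g (k+1)) := by
        have he1 : Even (k+1) := Odd.add_one ho
        rw [he1.neg_one_pow] at hsk1; linarith
      have := intermediate_value_Ioo' hle hcont (a := g (k+1)) (b := g k)
      have h0 : (0:ℝ) ∈ Set.Ioo (D.eval (g k)) (D.eval (g (k+1))) := ⟨h1, h2⟩
      obtain ⟨y, hy, hy0⟩ := this h0
      exact ⟨y, hy, hy0⟩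
  choose y hy hy0 using hroots
  -- y is injective
  have hyanti : ∀ i j : Fin n, i < j → y j < y i := by
    intro i j hij
    have h1 : y j < g j := (hy j).2
    have h2 : g ((i:ℕ)+1) < y i := (hy i).1
    have h3 : g (j:ℕ) ≤ g ((i:ℕ)+1) := hganti (by exact_mod_cast hij) (le_of_lt j.2)
    linarith
  have hyinj : Function.Injective y := by
    intro i j hijeq
    by_contra hne
    rcases lt_or_gt_of_ne hne with h | h
    · exact absurd hijeq (ne_of_gt (hyanti i j h))
    · exact absurd hijeq (ne_of_lt (hyanti j i h))
  -- count roots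
  have hcard : (Finset.univ.image y).card = n := by
    rw [Finset.card_image_of_injective _ hyinj, Finset.card_univ, Fintype.card_fin]
  have hsub : (Finset.univ.image y) ⊆ D.roots.toFinset := by
    intro x hx
    obtain ⟨i, _, rfl⟩ := Finset.mem_image.mp hx
    rw [Multiset.mem_toFinset, mem_roots hD0]
    exact hy0 i
  have : n ≤ D.natDegree := by
    calc n = (Finset.univ.image y).card := hcard.symm
      _ ≤ D.roots.toFinset.card := Finset.card_le_card hsub
      _ ≤ Multiset.card D.roots := Multiset.toFinset_card_le _
      _ ≤ D.natDegree := card_roots' D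
  omega

noncomputable def diagPoly {K : Type*} [Semiring K] (a : ℕ → K) (n : ℕ) : Polynomial K :=
  ∑ j ∈ Finset.range (n+1), Polynomial.C (a j) * Polynomial.X ^ j

lemma diagPoly_coeff {K : Type*} [Semiring K] (a : ℕ → K) (n j : ℕ) (hj : j ≤ n) :
    (diagPoly a n).coeff j = a j := by
  rw [diagPoly, finset_sum_coeff]
  simp only [coeff_C_mul, coeff_X_pow]
  rw [Finset.sum_eq_single j]
  · simp
  · intro b _ hbj
    simp [Ne.symm hbj]
  · intro h
    exact absurd (Finset.mem_range.mpr (Nat.lt_succ_of_le hj)) h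

lemma diagPoly_natDegree_le {K : Type*} [Semiring K] [Nontrivial K] (a : ℕ → K) (n : ℕ) :
    (diagPoly a n).natDegree ≤ n := by
  refine natDegree_sum_le_of_forall_le _ _ fun j hj => ?_
  refine (natDegree_C_mul_le _ _).trans ?_
  simp only [natDegree_X_pow]
  exact Nat.lt_succ_iff.mp (Finset.mem_range.mp hj)

lemma diagPoly_monic {K : Type*} [Semiring K] [Nontrivial K] (a : ℕ → K) (n : ℕ)
    (h : a n = 1) : (diagPoly a n).Monic ∧ (diagPoly a n).natDegree = n := by
  have hne : (diagPoly a n).coeff n ≠ 0 := by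
    rw [diagPoly_coeff a n n le_rfl, h]
    exact one_ne_zero
  have hdeg : (diagPoly a n).natDegree = n :=
    le_antisymm (diagPoly_natDegree_le a n) (le_natDegree_of_ne_zero hne)
  refine ⟨?_, hdeg⟩
  rw [Monic, leadingCoeff, hdeg, diagPoly_coeff a n n le_rfl, h]

lemma diagPoly_eval {K : Type*} [CommSemiring K] (a : ℕ → K) (n : ℕ) (x : K) :
    (diagPoly a n).eval x = ∑ j ∈ Finset.range (n+1), a j * x ^ j := by
  rw [diagPoly, eval_finset_sum]
  simp

-- sum of powers of a primitive root
lemma rootsum {m : ℕ} (hm : 1 ≤ m) {ζ : ℂ} (hζ : IsPrimitiveRoot ζ m) (i : ℕ) :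
    ∑ k ∈ Finset.range m, (ζ ^ i) ^ k = if m ∣ i then (m : ℂ) else 0 := by
  by_cases h : m ∣ i
  · obtain ⟨q, rfl⟩ := h
    rw [if_pos ⟨q, rfl⟩]
    have : ζ ^ (m * q) = 1 := by
      rw [pow_mul, hζ.pow_eq_one, one_pow]
    rw [this]
    simp
  · rw [if_neg h]
    have hne : ζ ^ i ≠ 1 := by
      intro he
      exact h ((hζ.pow_eq_one_iff_dvd i).mp he)
    rw [geom_sum_eq hne]
    have : (ζ ^ i) ^ m = 1 := by
      rw [← pow_mul, mul_comm, pow_mul, hζ.pow_eq_one, one_pow]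
    rw [this]
    simp

-- the averaging identity
lemma diag_eval {m n : ℕ} (hm : 1 ≤ m) {ζ : ℂ} (hζ : IsPrimitiveRoot ζ m)
    (P : Polynomial ℂ) (hdeg : P.natDegree = m * n) (z : ℂ) :
    (m : ℂ) * (diagPoly (fun j => P.coeff (m*j)) n).eval (z ^ m)
      = ∑ k ∈ Finset.range m, P.eval (ζ ^ k * z) := by
  have heval : ∀ k : ℕ, P.eval (ζ ^ k * z)
      = ∑ i ∈ Finset.range (m*n+1), P.coeff i * (ζ ^ (k*i) * z ^ i) := by
    intro k
    rw [eval_eq_sum_range, hdeg]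
    refine Finset.sum_congr rfl fun i _ => ?_
    rw [mul_pow, ← pow_mul]
  rw [Finset.sum_congr rfl fun k _ => heval k, Finset.sum_comm]
  have hswap : ∀ i : ℕ, ∑ k ∈ Finset.range m, P.coeff i * (ζ ^ (k*i) * z ^ i)
      = P.coeff i * z ^ i * (if m ∣ i then (m:ℂ) else 0) := by
    intro i
    rw [← rootsum hm hζ i, Finset.mul_sum]
    refine Finset.sum_congr rfl fun k _ => ?_
    rw [← pow_mul, mul_comm i k]
    ring
  rw [Finset.sum_congr rfl fun i _ => hswap i]
  have hsummand : ∀ i : ℕ, P.coeff i * z ^ i * (if m ∣ i then (m:ℂ) else 0)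
      = if m ∣ i then P.coeff i * z ^ i * m else 0 := by
    intro i
    split <;> simp
  rw [Finset.sum_congr rfl fun i _ => hsummand i, ← Finset.sum_filter]
  rw [diagPoly_eval, Finset.mul_sum]
  have hm0 : 0 < m := hm
  refine Finset.sum_nbij' (fun j => m * j) (fun i => i / m) ?_ ?_ ?_ ?_ ?_
  · intro j hj
    rw [Finset.mem_filter, Finset.mem_range]
    refine ⟨?_, ⟨j, rfl⟩⟩
    have := Finset.mem_range.mp hj
    have : j ≤ n := by omega
    calc m * j ≤ m * n := Nat.mul_le_mul_left m this
      _ < m * n + 1 := Nat.lt_succ_self _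
  · intro i hi
    rw [Finset.mem_filter, Finset.mem_range] at hi
    obtain ⟨hilt, q, rfl⟩ := hi
    simp only [Finset.mem_range]
    rw [Nat.mul_div_cancel_left q hm0]
    by_contra hq
    push_neg at hq
    have h1 : m * (n + 1) ≤ m * q := Nat.mul_le_mul_left m hq
    have h2 : m * (n + 1) = m * n + m := by ring
    omega
  · intro j _
    exact Nat.mul_div_cancel_left j hm0
  · intro i hi
    rw [Finset.mem_filter] at hi
    exact Nat.mul_div_cancel' hi.2
  · intro j _
    rw [← pow_mul]
    ring

lemma Estar_bound {m : ℕ} (hm : 1 ≤ m) {z : ℂ} (hz : z ∈ Estar m) : ‖z‖ ≤ 2 := by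
  obtain ⟨x, hx, hxz⟩ := hz
  have habs : (‖z‖) ^ m ≤ 2 := by
    rw [← norm_pow, ← hxz, Complex.norm_real, Real.norm_eq_abs]
    rw [abs_le]
    exact ⟨hx.1, hx.2⟩
  by_contra hgt
  push_neg at hgt
  have h1 : (2:ℝ) ^ m < (‖z‖) ^ m :=
    pow_lt_pow_left₀ hgt (by norm_num) (by omega)
  have h2 : (2:ℝ) ≤ 2 ^ m := le_self_pow₀ (by norm_num) (by omega)
  linarith

lemma Estar_bddAbove {m : ℕ} (hm : 1 ≤ m) (P : Polynomial ℂ) :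
    ∃ B : ℝ, ∀ z ∈ Estar m, ‖P.eval z‖ ≤ B := by
  obtain ⟨B, hB⟩ := (isCompact_closedBall (0:ℂ) 2).exists_bound_of_continuousOn
    (P.continuous.continuousOn (s := Metric.closedBall (0:ℂ) 2))
  refine ⟨B, fun z hz => ?_⟩
  have hz2 : z ∈ Metric.closedBall (0:ℂ) 2 := by
    rw [Metric.mem_closedBall, dist_zero_right]
    exact Estar_bound hm hz
  have := hB z hz2
  exact this

/-- key: every element of the chebNorm set for `Estar m` at degree `m*n` is at least 2 -/
lemma estar_lower {m n : ℕ} (hm : 1 ≤ m) (hn : 1 ≤ n) (P : Polynomial ℂ)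
    (hPmon : P.Monic) (hPdeg : P.natDegree = m * n) :
    2 ≤ ⨆ z ∈ Estar m, ‖P.eval z‖ := by
  classical
  set S := ⨆ z ∈ Estar m, ‖P.eval z‖ with hs
  obtain ⟨B, hB⟩ := Estar_bddAbove hm P
  have hbdd : BddAbove (Set.range fun z => ⨆ _ : z ∈ Estar m, ‖P.eval z‖) := by
    refine ⟨max B 0, ?_⟩
    rintro r ⟨z, rfl⟩
    by_cases hz : z ∈ Estar m
    · show (⨆ _ : z ∈ Estar m, ‖P.eval z‖) ≤ max B 0
      rw [ciSup_pos (f := fun _ => ‖P.eval z‖) hz]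
      exact le_max_of_le_left (hB z hz)
    · show (⨆ _ : z ∈ Estar m, ‖P.eval z‖) ≤ max B 0
      have : IsEmpty (z ∈ Estar m) := ⟨hz⟩
      rw [Real.iSup_of_isEmpty]
      exact le_max_right _ _
  have hleS : ∀ z ∈ Estar m, ‖P.eval z‖ ≤ S := by
    intro z hz
    rw [hs]
    have : ‖P.eval z‖ = ⨆ _ : z ∈ Estar m, ‖P.eval z‖ :=
      (ciSup_pos (f := fun _ => ‖P.eval z‖) hz).symm
    rw [this]
    exact le_ciSup hbdd z
  -- primitive root
  have hm0 : (m : ℕ) ≠ 0 := by omega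
  set ζ := Complex.exp (2 * Real.pi * Complex.I / m) with hζdef
  have hζ : IsPrimitiveRoot ζ m := Complex.isPrimitiveRoot_exp m hm0
  -- diagonal polynomial
  set Q := diagPoly (fun j => P.coeff (m*j)) n with hQ
  have hQn : (fun j => P.coeff (m*j)) n = 1 := by
    have : P.coeff (m*n) = 1 := by
      rw [← hPdeg]
      exact hPmon.coeff_natDegree
    simpa using this
  obtain ⟨hQmon, hQdeg⟩ := diagPoly_monic (fun j => P.coeff (m*j)) n hQn
  -- bound |Q(x)| ≤ S on [-2,2]
  have hQbound : ∀ x ∈ Set.Icc (-2:ℝ) 2, ‖Q.eval (x:ℂ)‖ ≤ S := by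
    intro x hx
    obtain ⟨z, hz⟩ := IsAlgClosed.exists_pow_nat_eq (k := ℂ) (x:ℂ) (by omega : 0 < m)
    have hzE : z ∈ Estar m := ⟨x, hx, hz.symm⟩
    have hkey := diag_eval hm hζ P hPdeg z
    rw [hz] at hkey
    have habs : (m:ℝ) * ‖Q.eval (x:ℂ)‖ ≤ (m:ℝ) * S := by
      calc (m:ℝ) * ‖Q.eval (x:ℂ)‖ = ‖(m:ℂ) * Q.eval (x:ℂ)‖ := by
            rw [norm_mul]
            norm_num
        _ = ‖∑ k ∈ Finset.range m, P.eval (ζ ^ k * z)‖ := by rw [hkey]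
        _ ≤ ∑ k ∈ Finset.range m, ‖P.eval (ζ ^ k * z)‖ :=
            norm_sum_le _ _
        _ ≤ ∑ k ∈ Finset.range m, S := by
            refine Finset.sum_le_sum fun k _ => hleS _ ?_
            obtain ⟨x', hx', hxz'⟩ := hzE
            exact ⟨x', hx', by rw [hxz', mul_pow, ← pow_mul, mul_comm k m, pow_mul, hζ.pow_eq_one, one_pow, one_mul]⟩
        _ = (m:ℝ) * S := by rw [Finset.sum_const, Finset.card_range, nsmul_eq_mul]
    have hmpos : (0:ℝ) < m := by exact_mod_cast Nat.pos_of_ne_zero hm0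
    exact le_of_mul_le_mul_left habs hmpos
  -- real part polynomial
  set R := diagPoly (fun i => (Q.coeff i).re) n with hR
  have hRn : (fun i => (Q.coeff i).re) n = 1 := by
    have : Q.coeff n = 1 := by
      rw [← hQdeg]
      exact hQmon.coeff_natDegree
    simp [this]
  obtain ⟨hRmon, hRdeg⟩ := diagPoly_monic (fun i => (Q.coeff i).re) n hRn
  have hReval : ∀ x : ℝ, R.eval x = (Q.eval (x:ℂ)).re := by
    intro x
    rw [hR, diagPoly_eval]
    have hQeval : Q.eval (x:ℂ) = ∑ j ∈ Finset.range (n+1), Q.coeff j * (x:ℂ) ^ j := by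
      conv_lhs => rw [hQ, diagPoly_eval]
      refine Finset.sum_congr rfl fun j hj => ?_
      rw [hQ, diagPoly_coeff _ n j (Nat.lt_succ_iff.mp (Finset.mem_range.mp hj))]
    rw [hQeval, Complex.re_sum]
    refine Finset.sum_congr rfl fun j _ => ?_
    rw [← Complex.ofReal_pow, Complex.mul_re, Complex.ofReal_re, Complex.ofReal_im]
    ring
  have hRbound : ∀ x ∈ Set.Icc (-2:ℝ) 2, |R.eval x| ≤ S := by
    intro x hx
    rw [hReval]
    exact (Complex.abs_re_le_norm _).trans (hQbound x hx)
  exact interval_lb hn R hRmon hRdeg hRbound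

theorem chebNorm_Estar_mul_eq_two (m n : ℕ) (hm : 1 ≤ m) (hn : 1 ≤ n) :
    chebNorm (Estar m) (m * n) = 2 := by
  classical
  have hlow : ∀ r ∈ { r : ℝ | ∃ P : Polynomial ℂ, P.Monic ∧ P.natDegree = m * n ∧
      r = ⨆ z ∈ Estar m, ‖P.eval z‖ }, 2 ≤ r := by
    rintro r ⟨P, hPm, hPd, rfl⟩
    exact estar_lower hm hn P hPm hPd
  set P₀ : Polynomial ℂ := ((cheb n).map (algebraMap ℝ ℂ)).comp (Polynomial.X ^ m) with hP₀
  have hmapmon : ((cheb n).map (algebraMap ℝ ℂ)).Monic := (cheb_monic hn).map _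
  have hP₀mon : P₀.Monic := hmapmon.comp (monic_X_pow m) (by
    rw [natDegree_X_pow]; omega)
  have hP₀deg : P₀.natDegree = m * n := by
    rw [hP₀, natDegree_comp, natDegree_X_pow, (cheb_monic hn).natDegree_map, cheb_natDegree,
      Nat.mul_comm]
  have hub : (⨆ z ∈ Estar m, ‖P₀.eval z‖) ≤ 2 := by
    refine Real.iSup_le (fun z => Real.iSup_le (fun hz => ?_) (by norm_num)) (by norm_num)
    obtain ⟨x, hx, hxz⟩ := hz
    have heq : P₀.eval z = (((cheb n).eval x : ℝ) : ℂ) := by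
      rw [hP₀, eval_comp, eval_pow, eval_X, ← hxz]
      rw [show ((x:ℝ):ℂ) = algebraMap ℝ ℂ x from rfl, eval_map, eval₂_at_apply]
      rfl
    rw [heq, Complex.norm_real, Real.norm_eq_abs]
    exact cheb_bound hx
  have hmem : (⨆ z ∈ Estar m, ‖P₀.eval z‖) ∈
      { r : ℝ | ∃ P : Polynomial ℂ, P.Monic ∧ P.natDegree = m * n ∧
      r = ⨆ z ∈ Estar m, ‖P.eval z‖ } := ⟨P₀, hP₀mon, hP₀deg, rfl⟩
  rw [chebNorm]
  apply le_antisymm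
  · exact (csInf_le ⟨2, hlow⟩ hmem).trans hub
  · exact le_csInf ⟨_, hmem⟩ hlow
end

section
/- Let m ≥ 1 and let l be an integer with 1 ≤ l < 2m. Then the monomial z^l attains the l-th Chebyshev norm of E_m, and t_l(E_m) = 2^{l/m}; in particular t_{2m−1}(E_m) = 2^{2−1/m}, which tends to 4 as m → ∞. -/
open Complex Polynomial Filter Finset

/-- The primitive `2m`-th root of unity `e^{iπ/m}`. -/
noncomputable def zet (m : ℕ) : ℂ := Complex.exp ((Real.pi / m : ℝ) * Complex.I)

/-- The positive real `2^{1/m}`, as a complex number. -/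
noncomputable def etaC (m : ℕ) : ℂ := ((2:ℝ) ^ ((1:ℝ)/m) : ℝ)

lemma estar_abs_le {m : ℕ} (hm : 1 ≤ m) {z : ℂ} (hz : z ∈ Estar m) :
    ‖z‖ ≤ (2:ℝ) ^ ((1:ℝ)/m) := by
  obtain ⟨x, hx, hxz⟩ := hz
  have hm' : (m:ℝ) ≠ 0 := Nat.cast_ne_zero.mpr (by omega)
  have h1 : ‖z‖ ^ m ≤ 2 := by
    rw [← norm_pow, ← hxz, Complex.norm_real, Real.norm_eq_abs]
    exact abs_le.mpr hx
  have h0 : (0:ℝ) ≤ ‖z‖ := norm_nonneg _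
  calc ‖z‖ = ((‖z‖) ^ m) ^ ((1:ℝ)/m) := by
        rw [← Real.rpow_natCast _ m, ← Real.rpow_mul h0, mul_one_div,
          div_self hm', Real.rpow_one]
    _ ≤ (2:ℝ) ^ ((1:ℝ)/m) := Real.rpow_le_rpow (by positivity) h1 (by positivity)

lemma etaC_pow {m : ℕ} (hm : 1 ≤ m) : (etaC m) ^ m = 2 := by
  have hm' : (m:ℝ) ≠ 0 := Nat.cast_ne_zero.mpr (by omega)
  rw [etaC, ← Complex.ofReal_pow, ← Real.rpow_natCast _ m, ← Real.rpow_mul (by norm_num),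
    one_div, inv_mul_cancel₀ hm', Real.rpow_one]
  norm_num

lemma rpow_pow {m l : ℕ} (hm : 1 ≤ m) :
    ((2:ℝ) ^ ((1:ℝ)/m)) ^ l = (2:ℝ) ^ ((l:ℝ)/m) := by
  rw [← Real.rpow_natCast ((2:ℝ) ^ ((1:ℝ)/m)) l, ← Real.rpow_mul (by norm_num)]
  congr 1; ring

lemma zet_prim {m : ℕ} (hm : 1 ≤ m) : IsPrimitiveRoot (zet m) (2*m) := by
  have h := Complex.isPrimitiveRoot_exp (2*m) (by omega)
  have hm' : (m:ℂ) ≠ 0 := Nat.cast_ne_zero.mpr (by omega)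
  have : 2 * (Real.pi:ℂ) * Complex.I / (↑(2*m) : ℕ) = (Real.pi / m : ℝ) * Complex.I := by
    push_cast; field_simp
  rwa [this] at h

lemma zet_abs (m : ℕ) : ‖zet m‖ = 1 := Complex.norm_exp_ofReal_mul_I _

lemma zet_pow_m {m : ℕ} (hm : 1 ≤ m) : (zet m) ^ m = -1 := by
  have hm' : (m:ℂ) ≠ 0 := Nat.cast_ne_zero.mpr (by omega)
  rw [zet, ← Complex.exp_nat_mul]
  rw [show (m:ℂ) * ((Real.pi / m : ℝ) * Complex.I) = (Real.pi:ℂ) * Complex.I by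
    push_cast; field_simp]
  exact Complex.exp_pi_mul_I

lemma zet_geom {m d : ℕ} (hm : 1 ≤ m) (hd0 : 0 < d) (hd : d < 2*m) :
    ∑ k ∈ range (2*m), ((zet m)^d)^k = 0 := by
  rw [geom_sum_eq ((zet_prim hm).pow_ne_one_of_pos_of_lt hd0.ne' hd)]
  rw [← pow_mul, mul_comm d, pow_mul, (zet_prim hm).pow_eq_one, one_pow]
  simp

lemma pt_mem {m : ℕ} (hm : 1 ≤ m) (k : ℕ) : etaC m * (zet m)^k ∈ Estar m := by
  refine ⟨2 * (-1:ℝ)^k, ?_, ?_⟩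
  · rcases Nat.even_or_odd k with h | h
    · rw [h.neg_one_pow]; norm_num
    · rw [h.neg_one_pow]; norm_num
  · rw [mul_pow, ← pow_mul, mul_comm k m, pow_mul, etaC_pow hm, zet_pow_m hm]
    push_cast; ring

lemma biSup_le' {E : Set ℂ} {f : ℂ → ℝ} {B : ℝ} (hB : ∀ z ∈ E, f z ≤ B) (hB0 : 0 ≤ B) :
    (⨆ z ∈ E, f z) ≤ B :=
  Real.iSup_le (fun z => Real.iSup_le (fun h => hB z h) hB0) hB0

lemma le_biSup' {E : Set ℂ} {f : ℂ → ℝ} {B : ℝ} (hB : ∀ z ∈ E, f z ≤ B) {z₀ : ℂ}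
    (hz₀ : z₀ ∈ E) : f z₀ ≤ ⨆ z ∈ E, f z := by
  have hbdd : BddAbove (Set.range fun z => ⨆ _ : z ∈ E, f z) := by
    refine ⟨max B 0, ?_⟩
    rintro x ⟨z, rfl⟩
    exact Real.iSup_le (fun h => (hB z h).trans (le_max_left _ _)) (le_max_right _ _)
  calc f z₀ = ⨆ _ : z₀ ∈ E, f z₀ := (ciSup_pos (f := fun _ => f z₀) hz₀).symm
    _ ≤ ⨆ z, ⨆ _ : z ∈ E, f z := le_ciSup hbdd z₀

lemma isCompact_Estar (m : ℕ) (hm : 1 ≤ m) : IsCompact (Estar m) := by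
  have hE : Estar m = (fun z : ℂ => z ^ m) ⁻¹' ((Complex.ofReal) '' Set.Icc (-2:ℝ) 2) := by
    ext z; simp [Estar, Set.mem_image]
  have hcl : IsClosed (Estar m) := by
    rw [hE]
    exact ((isCompact_Icc.image Complex.continuous_ofReal).isClosed).preimage (continuous_pow m)
  have hsub : Estar m ⊆ Metric.closedBall 0 2 := by
    intro z hz
    obtain ⟨x, hx, hxz⟩ := hz
    simp only [Metric.mem_closedBall, dist_zero_right]
    by_contra h
    push_neg at h
    have h2 : (2:ℝ) < ‖z‖ ^ m := by
      calc (2:ℝ) < ‖z‖ := h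
        _ ≤ ‖z‖ ^ m := le_self_pow₀ (by linarith) (by omega)
    rw [← norm_pow, ← hxz, Complex.norm_real, Real.norm_eq_abs] at h2
    have := abs_le.mpr hx
    linarith
  exact (isCompact_closedBall 0 2).of_isClosed_subset hcl hsub

lemma key_sum {m l : ℕ} (hm : 1 ≤ m) (hl2 : l < 2*m)
    (P : Polynomial ℂ) (hP : P.Monic) (hd : P.natDegree = l) :
    ∑ k ∈ range (2*m), P.eval (etaC m * (zet m)^k) * ((zet m)^(2*m-l))^k
      = ((2*m : ℕ) : ℂ) * (etaC m)^l := by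
  have step1 : ∀ k, P.eval (etaC m * (zet m)^k) * ((zet m)^(2*m-l))^k
      = ∑ j ∈ range (l+1), P.coeff j * (etaC m)^j * ((zet m)^(j+(2*m-l)))^k := by
    intro k
    rw [eval_eq_sum_range, hd, sum_mul]
    refine sum_congr rfl fun j _ => ?_
    ring
  calc ∑ k ∈ range (2*m), P.eval (etaC m * (zet m)^k) * ((zet m)^(2*m-l))^k
      = ∑ k ∈ range (2*m), ∑ j ∈ range (l+1),
          P.coeff j * (etaC m)^j * ((zet m)^(j+(2*m-l)))^k :=
        sum_congr rfl fun k _ => step1 k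
    _ = ∑ j ∈ range (l+1), ∑ k ∈ range (2*m),
          P.coeff j * (etaC m)^j * ((zet m)^(j+(2*m-l)))^k := sum_comm
    _ = ∑ j ∈ range (l+1), P.coeff j * (etaC m)^j *
          (∑ k ∈ range (2*m), ((zet m)^(j+(2*m-l)))^k) := by
        refine sum_congr rfl fun j _ => (mul_sum _ _ _).symm
    _ = ((2*m : ℕ) : ℂ) * (etaC m)^l := by
        rw [Finset.sum_eq_single l]
        · have : l + (2*m - l) = 2*m := by omega
          have hc : P.coeff l = 1 := by rw [← hd]; exact hP.coeff_natDegree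
          rw [this, (zet_prim hm).pow_eq_one, hc]
          simp
          ring
        · intro j hj hjl
          have hjlt : j < l := by simp at hj; omega
          rw [zet_geom hm (by omega) (by omega), mul_zero]
        · intro h
          exact absurd (self_mem_range_succ l) h

lemma cheb_lb {m l : ℕ} (hm : 1 ≤ m) (hl2 : l < 2*m)
    (P : Polynomial ℂ) (hP : P.Monic) (hd : P.natDegree = l) :
    (2:ℝ) ^ ((l:ℝ)/(m:ℝ)) ≤ ⨆ z ∈ Estar m, ‖P.eval z‖ := by
  set r := ⨆ z ∈ Estar m, ‖P.eval z‖ with hr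
  obtain ⟨B, hB⟩ := (isCompact_Estar m hm).bddAbove_image
    ((continuous_norm.comp P.continuous).continuousOn)
  have hB' : ∀ z ∈ Estar m, ‖P.eval z‖ ≤ B := fun z hz =>
    hB (Set.mem_image_of_mem _ hz)
  have hfr : ∀ z ∈ Estar m, ‖P.eval z‖ ≤ r := fun z hz =>
    le_biSup' hB' hz
  have habs : ‖((2*m : ℕ) : ℂ) * (etaC m)^l‖
      = (2*m : ℕ) * (2:ℝ) ^ ((l:ℝ)/(m:ℝ)) := by
    rw [norm_mul, norm_pow, Complex.norm_natCast, etaC, Complex.norm_real, Real.norm_eq_abs,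
      _root_.abs_of_nonneg (by positivity), rpow_pow hm]
  have hkey : ((2*m : ℕ) : ℝ) * (2:ℝ) ^ ((l:ℝ)/(m:ℝ)) ≤ ((2*m : ℕ) : ℝ) * r := by
    calc ((2*m : ℕ) : ℝ) * (2:ℝ) ^ ((l:ℝ)/(m:ℝ))
        = ‖∑ k ∈ range (2*m),
            P.eval (etaC m * (zet m)^k) * ((zet m)^(2*m-l))^k‖ := by
          rw [key_sum hm hl2 P hP hd, habs]
      _ ≤ ∑ k ∈ range (2*m),
            ‖P.eval (etaC m * (zet m)^k) * ((zet m)^(2*m-l))^k‖ :=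
          norm_sum_le _ _
      _ = ∑ k ∈ range (2*m), ‖P.eval (etaC m * (zet m)^k)‖ := by
          refine sum_congr rfl fun k _ => ?_
          rw [norm_mul, norm_pow, norm_pow, zet_abs, one_pow, one_pow, mul_one]
      _ ≤ ∑ _k ∈ range (2*m), r :=
          sum_le_sum fun k _ => hfr _ (pt_mem hm k)
      _ = ((2*m : ℕ) : ℝ) * r := by
          rw [sum_const, card_range, nsmul_eq_mul]
  exact le_of_mul_le_mul_left hkey (Nat.cast_pos.mpr (by omega))

lemma abs_le_on_E {m l : ℕ} (hm : 1 ≤ m) :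
    ∀ z ∈ Estar m, ‖((X:Polynomial ℂ)^l).eval z‖ ≤ (2:ℝ) ^ ((l:ℝ)/(m:ℝ)) := by
  intro z hz
  rw [eval_pow, eval_X, norm_pow, ← rpow_pow hm]
  exact pow_le_pow_left₀ (norm_nonneg _) (estar_abs_le hm hz) l

lemma etaC_mem {m : ℕ} (hm : 1 ≤ m) : etaC m ∈ Estar m :=
  ⟨2, by norm_num, (etaC_pow hm).symm⟩

lemma sup_X_pow {m l : ℕ} (hm : 1 ≤ m) :
    (⨆ z ∈ Estar m, ‖((X:Polynomial ℂ)^l).eval z‖) = (2:ℝ) ^ ((l:ℝ)/(m:ℝ)) := by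
  refine le_antisymm (biSup_le' (abs_le_on_E hm) (by positivity)) ?_
  have h0 : ‖((X:Polynomial ℂ)^l).eval (etaC m)‖ = (2:ℝ) ^ ((l:ℝ)/(m:ℝ)) := by
    rw [eval_pow, eval_X, norm_pow, etaC, Complex.norm_real, Real.norm_eq_abs,
      _root_.abs_of_nonneg (by positivity), rpow_pow hm]
  calc (2:ℝ) ^ ((l:ℝ)/(m:ℝ)) = ‖((X:Polynomial ℂ)^l).eval (etaC m)‖ := h0.symm
    _ ≤ ⨆ z ∈ Estar m, ‖((X:Polynomial ℂ)^l).eval z‖ :=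
        le_biSup' (abs_le_on_E hm) (etaC_mem hm)

lemma chebNorm_eq {m l : ℕ} (hm : 1 ≤ m) (hl2 : l < 2*m) :
    chebNorm (Estar m) l = (2:ℝ) ^ ((l:ℝ)/(m:ℝ)) := by
  have hmem : (2:ℝ) ^ ((l:ℝ)/(m:ℝ)) ∈ { r : ℝ | ∃ P : Polynomial ℂ, P.Monic ∧
      P.natDegree = l ∧ r = ⨆ z ∈ Estar m, ‖P.eval z‖ } :=
    ⟨X^l, monic_X_pow l, natDegree_X_pow l, (sup_X_pow hm).symm⟩
  have hlb : ∀ r ∈ { r : ℝ | ∃ P : Polynomial ℂ, P.Monic ∧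
      P.natDegree = l ∧ r = ⨆ z ∈ Estar m, ‖P.eval z‖ },
      (2:ℝ) ^ ((l:ℝ)/(m:ℝ)) ≤ r := by
    rintro r ⟨P, hP, hd, rfl⟩
    exact cheb_lb hm hl2 P hP hd
  exact le_antisymm (csInf_le ⟨_, hlb⟩ hmem) (le_csInf ⟨_, hmem⟩ hlb)

lemma chebNorm_2m1 {m : ℕ} (hm : 1 ≤ m) :
    chebNorm (Estar m) (2 * m - 1) = (2 : ℝ) ^ (2 - (1 : ℝ) / (m : ℝ)) := by
  rw [chebNorm_eq hm (by omega)]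
  congr 1
  have hm' : (m:ℝ) ≠ 0 := Nat.cast_ne_zero.mpr (by omega)
  rw [Nat.cast_sub (by omega)]
  push_cast
  field_simp

theorem chebNorm_Estar_low_degrees :
    (∀ m l : ℕ, 1 ≤ m → 1 ≤ l → l < 2 * m →
      (⨆ z ∈ Estar m, ‖(Polynomial.X ^ l : Polynomial ℂ).eval z‖)
          = chebNorm (Estar m) l ∧
        chebNorm (Estar m) l = (2 : ℝ) ^ ((l : ℝ) / (m : ℝ))) ∧
    (∀ m : ℕ, 1 ≤ m →
      chebNorm (Estar m) (2 * m - 1) = (2 : ℝ) ^ (2 - (1 : ℝ) / (m : ℝ))) ∧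
    Filter.Tendsto (fun m : ℕ => chebNorm (Estar m) (2 * m - 1)) Filter.atTop (nhds 4) := by
  refine ⟨fun m l hm hl1 hl2 => ⟨?_, chebNorm_eq hm hl2⟩, fun m hm => chebNorm_2m1 hm, ?_⟩
  · rw [sup_X_pow hm, chebNorm_eq hm hl2]
  · have hev : (fun m : ℕ => chebNorm (Estar m) (2 * m - 1))
        =ᶠ[Filter.atTop] fun m : ℕ => (2:ℝ) ^ (2 - (1:ℝ)/(m:ℝ)) := by
      filter_upwards [Filter.eventually_ge_atTop 1] with m hm
      exact chebNorm_2m1 hm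
    rw [Filter.tendsto_congr' hev]
    have h1 : Filter.Tendsto (fun m : ℕ => 2 - (1:ℝ)/(m:ℝ)) Filter.atTop (nhds 2) := by
      have := tendsto_one_div_atTop_nhds_zero_nat (𝕜 := ℝ)
      simpa using tendsto_const_nhds.sub this
    have h2 : ContinuousAt (fun x : ℝ => (2:ℝ) ^ x) 2 :=
      Real.continuousAt_const_rpow (by norm_num)
    have h3 := h2.tendsto.comp h1
    have h4 : (2:ℝ) ^ (2:ℝ) = 4 := by
      rw [show (2:ℝ) = ((2:ℕ):ℝ) from by norm_num, Real.rpow_natCast]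
      norm_num
    rw [h4] at h3
    exact h3
end

section
/- (Achieser's norm formula) Let m ≥ 1, let a₁,…,a_{2m} be real numbers with |a_k| > 1 for every k, and define the weight w(x) = ∏_{k=1}^{2m} (1 − x/a_k)^{−1/2} for x ∈ [−1,1]. Then for every integer n > m, inf{ sup_{x ∈ [−1,1]} w(x)|P(x)| : P ∈ ℝ[X] monic of degree n } = 2^{1−n} · exp( (1/π) ∫_{−1}^{1} log w(x)/√(1 − x²) dx ). -/
set_option maxHeartbeats 1000000

open Polynomial Polynomial.Chebyshev Real Set MeasureTheory Complex



/-- For `|a| > 1` there is `r` with `|r| < 1` and `2 a r = 1 + r ^ 2`. -/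
lemma achieser_exists_r (a : ℝ) (ha : 1 < |a|) :
    ∃ r : ℝ, |r| < 1 ∧ 2 * a * r = 1 + r ^ 2 := by
  rcases lt_or_ge 0 a with hpos | hneg
  · have ha1 : 1 < a := by rcases abs_cases a with ⟨h1,h2⟩|⟨h1,h2⟩ <;> linarith
    refine ⟨a - Real.sqrt (a^2 - 1), ?_, ?_⟩
    · have hs : Real.sqrt (a^2-1) ^ 2 = a^2 - 1 := Real.sq_sqrt (by nlinarith)
      have hs0 : 0 ≤ Real.sqrt (a^2-1) := Real.sqrt_nonneg _
      have hlt : Real.sqrt (a^2-1) < a := by nlinarith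
      have hgt : a - 1 < Real.sqrt (a^2-1) := by nlinarith
      rw [abs_lt]; constructor <;> nlinarith
    · have hs : Real.sqrt (a^2-1) ^ 2 = a^2 - 1 := Real.sq_sqrt (by nlinarith)
      linear_combination -hs
  · have ha1 : a < -1 := by rcases abs_cases a with ⟨h1,h2⟩|⟨h1,h2⟩ <;> linarith
    refine ⟨a + Real.sqrt (a^2 - 1), ?_, ?_⟩
    · have hs : Real.sqrt (a^2-1) ^ 2 = a^2 - 1 := Real.sq_sqrt (by nlinarith)
      have hs0 : 0 ≤ Real.sqrt (a^2-1) := Real.sqrt_nonneg _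
      have hlt : Real.sqrt (a^2-1) < -a := by nlinarith
      have hgt : -a - 1 < Real.sqrt (a^2-1) := by nlinarith
      rw [abs_lt]; constructor <;> nlinarith
    · have hs : Real.sqrt (a^2-1) ^ 2 = a^2 - 1 := Real.sq_sqrt (by nlinarith)
      linear_combination -hs

/-- degree bound and top coefficient of Chebyshev T. -/
lemma achieser_T_aux : ∀ k : ℕ, (T ℝ (k : ℤ)).natDegree ≤ k ∧
    (T ℝ (k : ℤ)).coeff k = if k = 0 then 1 else 2 ^ (k - 1) := by
  have H : ∀ k : ℕ, ((T ℝ (k : ℤ)).natDegree ≤ k ∧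
      (T ℝ (k : ℤ)).coeff k = if k = 0 then 1 else 2 ^ (k - 1)) ∧
      ((T ℝ ((k+1 : ℕ) : ℤ)).natDegree ≤ k+1 ∧
      (T ℝ ((k+1 : ℕ) : ℤ)).coeff (k+1) = 2 ^ k) := by
    intro k
    induction k with
    | zero =>
      constructor
      · simp [Polynomial.Chebyshev.T_zero]
      · norm_num [Polynomial.Chebyshev.T_one]
    | succ k ih =>
      obtain ⟨⟨ihd0, ihc0⟩, ihd1, ihc1⟩ := ih
      have hrec : T ℝ ((k+2 : ℕ) : ℤ) = 2 * X * T ℝ ((k+1 : ℕ) : ℤ) - T ℝ (k : ℤ) := by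
        have := Polynomial.Chebyshev.T_add_two ℝ (k : ℤ)
        convert this using 2 <;> push_cast <;> ring
      refine ⟨⟨by simpa using ihd1, by simpa using ihc1⟩, ?_, ?_⟩
      · show (T ℝ ((k+2:ℕ) : ℤ)).natDegree ≤ k + 2
        rw [hrec]
        refine le_trans (Polynomial.natDegree_sub_le _ _) ?_
        rw [max_le_iff]
        refine ⟨le_trans (Polynomial.natDegree_mul_le) ?_, by omega⟩
        have h2X : (2 * X : ℝ[X]).natDegree ≤ 1 :=
          le_trans (Polynomial.natDegree_mul_le) (by simp)
        omega
      · show (T ℝ ((k+2:ℕ) : ℤ)).coeff (k+2) = 2 ^ (k+1)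
        rw [hrec]
        rw [Polynomial.coeff_sub]
        have h1 : (2 * X * T ℝ ((k+1:ℕ) : ℤ)).coeff (k+2) = 2 * (T ℝ ((k+1:ℕ):ℤ)).coeff (k+1) := by
          rw [mul_assoc, show ((2:ℝ[X]) = Polynomial.C 2) from (map_ofNat Polynomial.C 2).symm, Polynomial.coeff_C_mul,
            Polynomial.coeff_X_mul]
        have h2 : (T ℝ (k : ℤ)).coeff (k+2) = 0 :=
          Polynomial.coeff_eq_zero_of_natDegree_lt (by omega)
        rw [h1, h2, ihc1]; ring
  intro k; exact (H k).1


/-- characterisation of the (conditionally complete) double iSup over `Icc (-1) 1`. -/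
lemma achieser_ciSup_Icc (f : ℝ → ℝ) (hf : ContinuousOn f (Icc (-1) 1))
    (h0 : ∀ x ∈ Icc (-1:ℝ) 1, 0 ≤ f x) :
    ∃ x0 ∈ Icc (-1:ℝ) 1, (⨆ x ∈ Icc (-1:ℝ) 1, f x) = f x0 ∧
      ∀ x ∈ Icc (-1:ℝ) 1, f x ≤ f x0 := by
  obtain ⟨x0, hx0, hmax⟩ := isCompact_Icc.exists_isMaxOn (by norm_num : (Icc (-1:ℝ) 1).Nonempty)
    hf
  refine ⟨x0, hx0, ?_, fun x hx => hmax hx⟩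
  have hbdd : ∀ x : ℝ, (⨆ _ : x ∈ Icc (-1:ℝ) 1, f x) ≤ f x0 := by
    intro x
    rcases em (x ∈ Icc (-1:ℝ) 1) with h | h
    · simp only [h, ciSup_pos]; exact hmax h
    · simp only [h, iSup_neg, not_false_iff]
      simpa using h0 x0 hx0
  refine le_antisymm (ciSup_le hbdd) ?_
  have : (⨆ _ : x0 ∈ Icc (-1:ℝ) 1, f x0) = f x0 := by simp [hx0]
  rw [← this]
  exact le_ciSup ⟨f x0, fun y hy => by obtain ⟨x, rfl⟩ := hy; exact hbdd x⟩ x0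

/-- hitting times for a continuous function from `0` to `n π`. -/
lemma achieser_hitting (ψ : ℝ → ℝ) (hc : ContinuousOn ψ (Icc 0 π)) (n : ℕ)
    (h0 : ψ 0 = 0) (hπ : ψ π = n * π) :
    ∃ t : ℕ → ℝ, (∀ k, k ≤ n → t k ∈ Icc 0 π ∧ ψ (t k) = k * π) ∧
      (∀ k j, k < j → j ≤ n → t k < t j) := by
  have hπpos := Real.pi_pos
  set A : ℕ → Set ℝ := fun k => {θ ∈ Icc 0 π | ψ θ = k * π} with hA
  have hclosed : ∀ k, IsClosed (A k) := by
    intro k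
    have : A k = Icc 0 π ∩ ψ ⁻¹' {(k : ℝ) * π} := by ext θ; simp [hA, and_comm]
    rw [this]
    exact ContinuousOn.preimage_isClosed_of_isClosed hc isClosed_Icc isClosed_singleton
  have hne : ∀ k ≤ n, (A k).Nonempty := by
    intro k hk
    have : (k : ℝ) * π ∈ Icc (ψ 0) (ψ π) := by
      rw [h0, hπ]
      constructor
      · positivity
      · have : (k : ℝ) ≤ n := by exact_mod_cast hk
        nlinarith
    obtain ⟨θ, hθ, hθ'⟩ := intermediate_value_Icc (le_of_lt hπpos) hc this
    exact ⟨θ, hθ, hθ'⟩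
  set t : ℕ → ℝ := fun k => sInf (A k) with ht
  have hmem : ∀ k ≤ n, t k ∈ A k := by
    intro k hk
    exact (hclosed k).csInf_mem (hne k hk) ⟨0, fun θ hθ => hθ.1.1⟩
  refine ⟨t, fun k hk => ⟨(hmem k hk).1, (hmem k hk).2⟩, ?_⟩
  intro k j hkj hj
  have hkn : k ≤ n := le_trans (le_of_lt hkj) hj
  -- t k ≤ t j via IVT on [0, t j]
  have htj := hmem j hj
  have hle : t k ≤ t j := by
    have hsub : ContinuousOn ψ (Icc 0 (t j)) :=
      hc.mono (Icc_subset_Icc le_rfl htj.1.2)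
    have : (k : ℝ) * π ∈ Icc (ψ 0) (ψ (t j)) := by
      rw [h0, htj.2]
      constructor
      · positivity
      · have : (k : ℝ) ≤ j := by exact_mod_cast le_of_lt hkj
        nlinarith
    obtain ⟨θ, hθ, hθ'⟩ := intermediate_value_Icc htj.1.1 hsub this
    have : θ ∈ A k := ⟨⟨hθ.1, le_trans hθ.2 htj.1.2⟩, hθ'⟩
    exact le_trans (csInf_le ⟨0, fun θ' hθ' => hθ'.1.1⟩ this) hθ.2
  rcases lt_or_eq_of_le hle with h | h
  · exact h
  · exfalso
    have h1 := (hmem k hkn).2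
    have h2 := htj.2
    rw [h] at h1
    rw [h1] at h2
    have : (k:ℝ) = j := mul_right_cancel₀ Real.pi_ne_zero h2
    have : k = j := by exact_mod_cast this
    omega

/-- a real polynomial of degree `< n` cannot alternate in sign at `n+1` decreasing points. -/
lemma achieser_alternation (R : Polynomial ℝ) (n : ℕ) (hdeg : R.natDegree < n)
    (x : ℕ → ℝ) (hx : ∀ k j, k < j → j ≤ n → x j < x k)
    (hsign : ∀ k ≤ n, 0 < (-1 : ℝ) ^ k * R.eval (x k)) : False := by
  have hR0 : R ≠ 0 := by
    intro h
    have := hsign 0 (Nat.zero_le _)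
    simp [h] at this
  -- for each k < n, a root in Ioo (x (k+1)) (x k)
  have hroot : ∀ k, k < n → ∃ ξ, ξ ∈ Ioo (x (k+1)) (x k) ∧ R.eval ξ = 0 := by
    intro k hk
    have h1 := hsign k (le_of_lt hk)
    have h2 := hsign (k+1) hk
    have hlt : x (k+1) < x k := hx k (k+1) (Nat.lt_succ_self k) hk
    have hcont : ContinuousOn (fun y => R.eval y) (Icc (x (k+1)) (x k)) :=
      R.continuous.continuousOn
    rcases Nat.even_or_odd k with he | ho
    · have hk1 : 0 < R.eval (x k) := by
        have : (-1:ℝ)^k = 1 := he.neg_one_pow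
        rw [this, one_mul] at h1; exact h1
      have hk2 : R.eval (x (k+1)) < 0 := by
        have hodd : Odd (k+1) := Even.add_one he
        have : (-1:ℝ)^(k+1) = -1 := hodd.neg_one_pow
        rw [this] at h2; linarith
      have : (0:ℝ) ∈ Ioo (R.eval (x (k+1))) (R.eval (x k)) := ⟨hk2, hk1⟩
      obtain ⟨ξ, hξ, hξ'⟩ := intermediate_value_Ioo (le_of_lt hlt) hcont this
      exact ⟨ξ, hξ, hξ'⟩
    · have hk1 : R.eval (x k) < 0 := by
        have : (-1:ℝ)^k = -1 := ho.neg_one_pow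
        rw [this] at h1; linarith
      have hk2 : 0 < R.eval (x (k+1)) := by
        have heven : Even (k+1) := ho.add_one
        have : (-1:ℝ)^(k+1) = 1 := heven.neg_one_pow
        rw [this, one_mul] at h2; exact h2
      have : (0:ℝ) ∈ Ioo (R.eval (x k)) (R.eval (x (k+1))) := ⟨hk1, hk2⟩
      obtain ⟨ξ, hξ, hξ'⟩ := intermediate_value_Ioo' (le_of_lt hlt) hcont this
      exact ⟨ξ, hξ, hξ'⟩
  choose ξ hξmem hξroot using hroot
  -- ξ is strictly decreasing on k < n, hence injective
  have hdec : ∀ k j (hk : k < n) (hj : j < n), k < j → ξ j hj < ξ k hk := by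
    intro k j hk hj hkj
    have h1 : ξ j hj < x j := (hξmem j hj).2
    have h2 : x (k+1) < ξ k hk := (hξmem k hk).1
    have h3 : x j ≤ x (k+1) := by
      rcases lt_or_eq_of_le (Nat.succ_le_of_lt hkj) with h | h
      · exact le_of_lt (hx (k+1) j h (le_of_lt hj))
      · rw [← h]
    linarith
  -- build an injective map Fin n → roots
  have hcard : n ≤ Multiset.card R.roots := by
    classical
    set g : ℕ → ℝ := fun k => if h : k < n then ξ k h else 0 with hg
    have hginj : Set.InjOn g (Finset.range n) := by
      intro i hi j hj hij
      simp only [Finset.coe_range, Set.mem_Iio] at hi hj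
      by_contra hne
      rcases Nat.lt_or_ge i j with h | h
      · have := hdec i j hi hj h
        rw [hg] at hij; simp only [hi, hj, dif_pos] at hij
        rw [hij] at this; exact lt_irrefl _ this
      · have hji : j < i := lt_of_le_of_ne h (Ne.symm hne)
        have := hdec j i hj hi hji
        rw [hg] at hij; simp only [hi, hj, dif_pos] at hij
        rw [hij] at this; exact lt_irrefl _ this
    have hsub : (Finset.range n).image g ⊆ R.roots.toFinset := by
      intro y hy
      simp only [Finset.mem_image, Finset.mem_range] at hy
      obtain ⟨k, hk, rfl⟩ := hy
      rw [Multiset.mem_toFinset, Polynomial.mem_roots hR0]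
      simp only [hg, dif_pos hk]
      exact hξroot k hk
    calc n = ((Finset.range n).image g).card := by
            rw [Finset.card_image_of_injOn hginj, Finset.card_range]
      _ ≤ R.roots.toFinset.card := Finset.card_le_card hsub
      _ ≤ Multiset.card R.roots := R.roots.toFinset_card_le
  have := R.card_roots' 
  omega


lemma achieser_abs_factor (r θ : ℝ) :
    ‖1 - (r : ℂ) * Complex.exp (-(θ:ℂ) * Complex.I)‖ =
      Real.sqrt (1 - 2*r*Real.cos θ + r^2) := by
  have h : (1 - (r : ℂ) * Complex.exp (-(θ:ℂ) * Complex.I)) =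
      Complex.mk (1 - r * Real.cos θ) (r * Real.sin θ) := by
    rw [show (-(θ:ℂ) * Complex.I) = ((-θ : ℝ) : ℂ) * Complex.I by push_cast; ring,
      Complex.exp_mul_I]
    apply Complex.ext <;>
      simp [Complex.cos_ofReal_re, Complex.sin_ofReal_re, Real.cos_neg, Real.sin_neg] <;> ring
  rw [h, Complex.norm_def, Complex.normSq_mk]
  congr 1
  have := Real.sin_sq_add_cos_sq θ
  nlinarith [Real.sin_sq_add_cos_sq θ]

lemma achieser_q_pos {r : ℝ} (hr : |r| < 1) {c : ℝ} (hc : -1 ≤ c) (hc' : c ≤ 1) :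
    0 < 1 - 2*r*c + r^2 := by
  rcases abs_lt.mp hr with ⟨h1, h2⟩
  have hc2 : |c| ≤ 1 := abs_le.mpr ⟨hc, hc'⟩
  have h3 : r * c ≤ |r| := by
    calc r * c ≤ |r * c| := le_abs_self _
      _ = |r| * |c| := abs_mul r c
      _ ≤ |r| := by nlinarith [abs_nonneg r]
  have h4 : |r|^2 = r^2 := sq_abs r
  nlinarith [sq_nonneg (1 - |r|)]

lemma achieser_weight_factor {a r : ℝ} (hr : |r| < 1) (har : 2*a*r = 1 + r^2) (x : ℝ) :
    1 - x / a = (1 - 2*r*x + r^2) / (1 + r^2) := by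
  have hrpos : 0 < 1 + r^2 := by positivity
  have ha0 : a ≠ 0 := by
    intro h; rw [h] at har; simp at har; nlinarith
  field_simp
  linear_combination x * har

lemma achieser_rpow_factor {q s : ℝ} (hq : 0 < q) (hs : 0 < s) :
    (q / s) ^ (-(1:ℝ)/2) = Real.sqrt s / Real.sqrt q := by
  have h1 : (q / s : ℝ) ^ (-(1:ℝ)/2) = ((q/s) ^ ((1:ℝ)/2))⁻¹ := by
    rw [show (-(1:ℝ)/2) = -(1/2) by norm_num, Real.rpow_neg (by positivity)]
  rw [h1, ← Real.sqrt_eq_rpow, Real.sqrt_div hq.le, inv_div]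

lemma achieser_re_pos {r : ℝ} (hr : |r| < 1) (θ : ℝ) :
    0 < (1 - (r : ℂ) * Complex.exp (-(θ:ℂ) * Complex.I)).re := by
  have h : (1 - (r : ℂ) * Complex.exp (-(θ:ℂ) * Complex.I)).re = 1 - r * Real.cos θ := by
    rw [show (-(θ:ℂ) * Complex.I) = ((-θ : ℝ) : ℂ) * Complex.I by push_cast; ring,
      Complex.exp_mul_I]
    simp [Complex.cos_ofReal_re, Real.cos_neg]
  rw [h]
  have hc2 : |Real.cos θ| ≤ 1 := Real.abs_cos_le_one θ
  have h3 : r * Real.cos θ ≤ |r| := by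
    calc r * Real.cos θ ≤ |r * Real.cos θ| := le_abs_self _
      _ = |r| * |Real.cos θ| := abs_mul _ _
      _ ≤ |r| := by nlinarith [abs_nonneg r]
  linarith

lemma achieser_arg_zero {r : ℝ} (hr : |r| < 1) :
    Complex.arg (1 - (r : ℂ) * Complex.exp (-((0:ℝ):ℂ) * Complex.I)) = 0 := by
  have : (1 - (r : ℂ) * Complex.exp (-((0:ℝ):ℂ) * Complex.I)) = ((1 - r : ℝ) : ℂ) := by
    push_cast; simp
  rw [this, Complex.arg_ofReal_of_nonneg]
  rcases abs_lt.mp hr with ⟨h1, h2⟩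
  linarith

lemma achieser_arg_pi {r : ℝ} (hr : |r| < 1) :
    Complex.arg (1 - (r : ℂ) * Complex.exp (-((Real.pi:ℝ):ℂ) * Complex.I)) = 0 := by
  have hexp : Complex.exp (-((Real.pi:ℝ):ℂ) * Complex.I) = -1 := by
    rw [show (-((Real.pi:ℝ):ℂ) * Complex.I) = ((-Real.pi : ℝ) : ℂ) * Complex.I by push_cast; ring,
      Complex.exp_mul_I]
    apply Complex.ext <;>
      simp [Complex.cos_ofReal_re, Complex.sin_ofReal_re, Real.cos_neg, Real.sin_neg]
  have : (1 - (r : ℂ) * Complex.exp (-((Real.pi:ℝ):ℂ) * Complex.I)) = ((1 + r : ℝ) : ℂ) := by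
    rw [hexp]; push_cast; ring
  rw [this, Complex.arg_ofReal_of_nonneg]
  rcases abs_lt.mp hr with ⟨h1, h2⟩
  linarith

lemma achieser_arg_continuous {r : ℝ} (hr : |r| < 1) :
    Continuous (fun θ : ℝ => Complex.arg (1 - (r : ℂ) * Complex.exp (-(θ:ℂ) * Complex.I))) := by
  rw [continuous_iff_continuousAt]
  intro θ
  have hin : Continuous (fun θ : ℝ => 1 - (r : ℂ) * Complex.exp (-(θ:ℂ) * Complex.I)) := by
    fun_prop
  have hmem : (1 - (r:ℂ) * Complex.exp (-(θ:ℂ) * Complex.I)) ∈ Complex.slitPlane := by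
    rw [Complex.mem_slitPlane_iff]
    exact Or.inl (achieser_re_pos hr θ)
  exact ContinuousAt.comp (f := fun θ : ℝ => 1 - (r:ℂ) * Complex.exp (-(θ:ℂ) * Complex.I))
    (Complex.continuousAt_arg hmem) hin.continuousAt


noncomputable def Iach (r : ℝ) : ℝ := ∫ θ in (0:ℝ)..π, Real.log (1 - 2*r*Real.cos θ + r^2)

lemma achieser_q_pos' {r : ℝ} (hr : |r| < 1) (θ : ℝ) : 0 < 1 - 2*r*Real.cos θ + r^2 := by
  rcases abs_lt.mp hr with ⟨h1, h2⟩
  have hc2 : |Real.cos θ| ≤ 1 := Real.abs_cos_le_one θ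
  have h3 : r * Real.cos θ ≤ |r| := by
    calc r * Real.cos θ ≤ |r * Real.cos θ| := le_abs_self _
      _ = |r| * |Real.cos θ| := abs_mul _ _
      _ ≤ |r| := by nlinarith [abs_nonneg r]
  have h4 : |r|^2 = r^2 := sq_abs r
  nlinarith [sq_nonneg (1 - |r|)]

lemma Iach_cont {r : ℝ} (hr : |r| < 1) :
    Continuous (fun θ => Real.log (1 - 2*r*Real.cos θ + r^2)) := by
  have h : Continuous fun θ : ℝ => 1 - 2*r*Real.cos θ + r^2 := by fun_prop
  exact h.log (fun θ => ne_of_gt (achieser_q_pos' hr θ))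

lemma Iach_integrable {r : ℝ} (hr : |r| < 1) (a b : ℝ) :
    IntervalIntegrable (fun θ => Real.log (1 - 2*r*Real.cos θ + r^2)) volume a b :=
  (Iach_cont hr).intervalIntegrable a b

lemma Iach_neg {r : ℝ} (hr : |r| < 1) : Iach (-r) = Iach r := by
  have h := intervalIntegral.integral_comp_sub_left
    (fun θ => Real.log (1 - 2*r*Real.cos θ + r^2)) π (a := 0) (b := π)
  simp only [sub_zero, sub_self] at h
  rw [Iach, Iach]
  calc (∫ θ in (0:ℝ)..π, Real.log (1 - 2*(-r)*Real.cos θ + (-r)^2))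
      = ∫ θ in (0:ℝ)..π, Real.log (1 - 2*r*Real.cos (π - θ) + r^2) := by
        refine intervalIntegral.integral_congr (fun θ _ => ?_)
        rw [Real.cos_pi_sub]; ring_nf
    _ = ∫ θ in (0:ℝ)..π, Real.log (1 - 2*r*Real.cos θ + r^2) := h

lemma Iach_double {r : ℝ} (hr : |r| < 1) : Iach (r^2) = 2 * Iach r := by
  have hr2 : |r^2| < 1 := by rw [_root_.abs_pow]; nlinarith [abs_nonneg r, abs_lt.mp hr]
  have hposneg : ∀ θ : ℝ, (0:ℝ) < 1 + 2*r*Real.cos θ + r^2 := by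
    intro θ
    have := achieser_q_pos' (show |(-r)| < 1 by rwa [abs_neg]) θ
    nlinarith
  have hint1 := Iach_integrable hr 0 π
  have hint2 : IntervalIntegrable (fun θ => Real.log (1 + 2*r*Real.cos θ + r^2)) volume 0 π := by
    have h : Continuous fun θ : ℝ => 1 + 2*r*Real.cos θ + r^2 := by fun_prop
    exact (h.log (fun θ => ne_of_gt (hposneg θ))).intervalIntegrable 0 π
  have hIneg : Iach (-r) = ∫ θ in (0:ℝ)..π, Real.log (1 + 2*r*Real.cos θ + r^2) := by
    rw [Iach]
    exact intervalIntegral.integral_congr (fun θ _ => by ring_nf)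
  have key : Iach r + Iach (-r) = Iach (r^2) := by
    have h1 : Iach r + Iach (-r) =
        ∫ θ in (0:ℝ)..π, Real.log ((1 - 2*r*Real.cos θ + r^2) * (1 + 2*r*Real.cos θ + r^2)) := by
      rw [Iach, hIneg, ← intervalIntegral.integral_add hint1 hint2]
      refine intervalIntegral.integral_congr (fun θ _ => ?_)
      exact (Real.log_mul (ne_of_gt (achieser_q_pos' hr θ)) (ne_of_gt (hposneg θ))).symm
    have h3 : Iach r + Iach (-r) =
        ∫ θ in (0:ℝ)..π, Real.log (1 - 2*(r^2)*Real.cos (2*θ) + (r^2)^2) := by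
      rw [h1]
      refine intervalIntegral.integral_congr (fun θ _ => ?_)
      congr 1
      rw [Real.cos_two_mul]
      nlinarith [Real.sin_sq_add_cos_sq θ]
    have h4 : (∫ θ in (0:ℝ)..π, Real.log (1 - 2*(r^2)*Real.cos (2*θ) + (r^2)^2))
        = (2:ℝ)⁻¹ • ∫ φ in (0:ℝ)..(2*π), Real.log (1 - 2*(r^2)*Real.cos φ + (r^2)^2) := by
      have h := intervalIntegral.integral_comp_mul_left
        (fun φ => Real.log (1 - 2*(r^2)*Real.cos φ + (r^2)^2)) (c := 2) two_ne_zero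
        (a := 0) (b := π)
      rw [show (2:ℝ) * 0 = 0 by norm_num] at h
      exact h
    have h5 : (∫ φ in (0:ℝ)..(2*π), Real.log (1 - 2*(r^2)*Real.cos φ + (r^2)^2))
        = (∫ φ in (0:ℝ)..π, Real.log (1 - 2*(r^2)*Real.cos φ + (r^2)^2))
          + ∫ φ in π..(2*π), Real.log (1 - 2*(r^2)*Real.cos φ + (r^2)^2) :=
      (intervalIntegral.integral_add_adjacent_intervals (Iach_integrable hr2 0 π)
        (Iach_integrable hr2 π (2*π))).symm
    have h6 : (∫ φ in π..(2*π), Real.log (1 - 2*(r^2)*Real.cos φ + (r^2)^2))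
        = ∫ φ in (0:ℝ)..π, Real.log (1 - 2*(r^2)*Real.cos φ + (r^2)^2) := by
      have h := intervalIntegral.integral_comp_sub_left
        (fun φ => Real.log (1 - 2*(r^2)*Real.cos φ + (r^2)^2)) (2*π) (a := 0) (b := π)
      rw [show (2*π - π) = π by ring, sub_zero] at h
      rw [← h]
      refine intervalIntegral.integral_congr (fun φ _ => ?_)
      rw [show (2*π - φ) = -(φ - 2*π) by ring, Real.cos_neg, Real.cos_sub_two_pi]
    rw [h3, h4, h5, h6, Iach]
    rw [smul_eq_mul]
    ring
  rw [← key, Iach_neg hr]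
  ring

lemma Iach_bound {r ρ : ℝ} (hρ : ρ < 1) (h : |r| ≤ ρ) :
    |Iach r| ≤ (-(2:ℝ) * Real.log (1 - ρ)) * π := by
  have hρ0 : 0 ≤ ρ := le_trans (abs_nonneg r) h
  have hr1 : |r| < 1 := lt_of_le_of_lt h hρ
  have h1ρ : 0 < 1 - ρ := by linarith
  have key : ∀ θ : ℝ, |Real.log (1 - 2*r*Real.cos θ + r^2)| ≤ -(2:ℝ) * Real.log (1 - ρ) := by
    intro θ
    have htpos := achieser_q_pos' hr1 θ
    have hc2 : |Real.cos θ| ≤ 1 := Real.abs_cos_le_one θ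
    have h3 : r * Real.cos θ ≤ |r| := by
      calc r * Real.cos θ ≤ |r * Real.cos θ| := le_abs_self _
        _ = |r| * |Real.cos θ| := abs_mul _ _
        _ ≤ |r| := by nlinarith [abs_nonneg r]
    have h3' : -(r * Real.cos θ) ≤ |r| := by
      calc -(r * Real.cos θ) ≤ |r * Real.cos θ| := neg_le_abs _
        _ = |r| * |Real.cos θ| := abs_mul _ _
        _ ≤ |r| := by nlinarith [abs_nonneg r]
    have h4 : |r|^2 = r^2 := sq_abs r
    have hprod : (0:ℝ) ≤ (ρ - |r|) * (2 - ρ - |r|) :=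
      mul_nonneg (by linarith) (by linarith [abs_nonneg r])
    have hprod2 : (0:ℝ) ≤ (ρ - |r|) * (2 + ρ + |r|) :=
      mul_nonneg (by linarith) (by linarith [abs_nonneg r])
    have hlow : (1 - ρ)^2 ≤ 1 - 2*r*Real.cos θ + r^2 := by nlinarith
    have hup : 1 - 2*r*Real.cos θ + r^2 ≤ (1 + ρ)^2 := by nlinarith
    have h7 : (1+ρ) ≤ 1/(1-ρ) := by
      rw [le_div_iff₀ h1ρ]
      nlinarith
    have hup2 : 1 - 2*r*Real.cos θ + r^2 ≤ ((1-ρ)⁻¹)^2 := by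
      rw [← one_div]
      nlinarith [mul_nonneg (sub_nonneg.2 h7) (by positivity : (0:ℝ) ≤ 1/(1-ρ) + (1+ρ))]
    rw [abs_le]
    constructor
    · have hl := Real.log_le_log (by positivity) hlow
      rw [Real.log_pow] at hl
      push_cast at hl
      linarith
    · have hl := Real.log_le_log htpos hup2
      rw [Real.log_pow, Real.log_inv] at hl
      push_cast at hl
      linarith
  have hnorm := intervalIntegral.norm_integral_le_of_norm_le_const
      (a := (0:ℝ)) (b := π) (C := -(2:ℝ) * Real.log (1 - ρ))
      (f := fun θ => Real.log (1 - 2*r*Real.cos θ + r^2))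
      (fun θ _ => by simpa using key θ)
  rw [Real.norm_eq_abs, sub_zero, abs_of_pos Real.pi_pos] at hnorm
  rw [Iach]
  linarith [hnorm]

lemma Iach_eq_zero {r : ℝ} (hr : |r| < 1) : Iach r = 0 := by
  set B := (-(2:ℝ) * Real.log (1 - |r|)) * π with hB
  have hpow : ∀ k : ℕ, Iach (r ^ (2^k)) = 2^k * Iach r := by
    intro k
    induction k with
    | zero => simp
    | succ k ih =>
      have h1 : r ^ (2^(k+1)) = (r ^ (2^k))^2 := by
        rw [← pow_mul, ← pow_succ]
      have hrk : |r ^ (2^k)| < 1 := by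
        rw [_root_.abs_pow]
        exact pow_lt_one₀ (abs_nonneg r) hr (by positivity)
      rw [h1, Iach_double hrk, ih]
      ring
  have hble : ∀ k : ℕ, |Iach r| ≤ B / 2^k := by
    intro k
    have hrk : |r ^ (2^k)| ≤ |r| := by
      rw [_root_.abs_pow]
      exact pow_le_of_le_one (abs_nonneg r) (le_of_lt hr) (by positivity)
    have hb := Iach_bound hr hrk
    rw [hpow k, _root_.abs_mul, _root_.abs_pow, _root_.abs_two] at hb
    have h2k : (0:ℝ) < 2^k := by positivity
    rw [hB, le_div_iff₀ h2k]
    nlinarith [hb]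
  have htend : Filter.Tendsto (fun k : ℕ => B / 2^k) Filter.atTop (nhds 0) := by
    have heq : (fun k : ℕ => B / 2^k) = fun k : ℕ => B * (1/2:ℝ)^k := by
      funext k
      rw [div_pow, one_pow, mul_one_div]
    rw [heq]
    have := (tendsto_pow_atTop_nhds_zero_of_lt_one (by norm_num : (0:ℝ) ≤ 1/2)
      (by norm_num : (1/2:ℝ) < 1)).const_mul B
    simpa using this
  have h0 : |Iach r| ≤ 0 := ge_of_tendsto' htend hble
  exact abs_eq_zero.mp (le_antisymm h0 (abs_nonneg _))

lemma achieser_cos_image : Real.cos '' (Ioo 0 π) = Ioo (-1 : ℝ) 1 := by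
  ext y
  constructor
  · rintro ⟨θ, hθ, rfl⟩
    obtain ⟨h0, hπ⟩ := hθ
    have hmem : θ ∈ Icc 0 π := ⟨h0.le, hπ.le⟩
    constructor
    · have h := Real.strictAntiOn_cos hmem (Set.right_mem_Icc.mpr Real.pi_pos.le) hπ
      rwa [Real.cos_pi] at h
    · have h := Real.strictAntiOn_cos (Set.left_mem_Icc.mpr Real.pi_pos.le) hmem h0
      rwa [Real.cos_zero] at h
  · intro hy
    refine ⟨Real.arccos y, ⟨?_, ?_⟩, Real.cos_arccos (le_of_lt hy.1) (le_of_lt hy.2)⟩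
    · exact Real.arccos_pos.mpr hy.2
    · refine lt_of_le_of_ne (Real.arccos_le_pi y) (fun h => ?_)
      have := Real.cos_arccos (le_of_lt hy.1) (le_of_lt hy.2)
      rw [h, Real.cos_pi] at this
      linarith [hy.1]



lemma achieser_T_eq_natAbs (i : ℤ) : T ℝ i = T ℝ (i.natAbs : ℤ) := by
  rcases le_or_gt 0 i with h | h
  · rw [Int.natAbs_of_nonneg h]
  · rw [show ((i.natAbs : ℤ)) = -i by omega, Polynomial.Chebyshev.T_neg]



/-- The Achieser polynomial: monic of degree `n`, with explicit trigonometric values. -/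
lemma achieser_key (N n : ℕ) (hn1 : 1 ≤ n) (hNn : N < 2 * n) (r : Fin N → ℝ) :
    ∃ P : Polynomial ℝ, P.Monic ∧ P.natDegree = n ∧
      ∀ θ : ℝ, P.eval (Real.cos θ) = ((2:ℝ)^(n-1))⁻¹ *
        ((∏ k, ‖1 - (r k : ℂ) * Complex.exp (-(θ:ℂ) * Complex.I)‖) *
          Real.cos ((n:ℝ) * θ + ∑ k, Complex.arg (1 - (r k : ℂ) *
            Complex.exp (-(θ:ℂ) * Complex.I)))) := by
  classical
  set hp : Polynomial ℝ := ∏ k, (X - C (r k)) with hhp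
  have hpmonic : hp.Monic := monic_prod_of_monic _ _ (fun k _ => monic_X_sub_C (r k))
  have hpdeg : hp.natDegree = N := by
    rw [hhp, Polynomial.natDegree_prod_of_monic _ _ (fun k _ => monic_X_sub_C (r k))]
    simp
  set P : Polynomial ℝ := C ((2:ℝ)^(n-1))⁻¹ *
    ∑ j ∈ Finset.range (N+1), C (hp.coeff j) * T ℝ ((n:ℤ) - N + j) with hP
  have hTdeg : ∀ j ∈ Finset.range (N+1), (T ℝ ((n:ℤ) - N + j)).natDegree ≤ n := by
    intro j hj
    rw [achieser_T_eq_natAbs]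
    refine le_trans (achieser_T_aux _).1 ?_
    simp only [Finset.mem_range] at hj
    omega
  have hTdeg' : ∀ j ∈ Finset.range N, (T ℝ ((n:ℤ) - N + j)).natDegree < n := by
    intro j hj
    rw [achieser_T_eq_natAbs]
    refine lt_of_le_of_lt (achieser_T_aux _).1 ?_
    simp only [Finset.mem_range] at hj
    omega
  -- coefficient n
  have hsum_split : ∑ j ∈ Finset.range (N+1), C (hp.coeff j) * T ℝ ((n:ℤ) - N + j)
      = (∑ j ∈ Finset.range N, C (hp.coeff j) * T ℝ ((n:ℤ) - N + j)) + T ℝ (n:ℤ) := by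
    rw [Finset.sum_range_succ]
    congr 1
    · rw [show hp.coeff N = 1 from by
        have := hpmonic; rw [Polynomial.Monic, Polynomial.leadingCoeff, hpdeg] at this
        exact this]
      rw [map_one, one_mul]
      congr 1
      omega
  have hcoeffn : P.coeff n = 1 := by
    rw [hP, Polynomial.coeff_C_mul, hsum_split, Polynomial.coeff_add]
    have h1 : (∑ j ∈ Finset.range N, C (hp.coeff j) * T ℝ ((n:ℤ) - N + j)).coeff n = 0 := by
      rw [Polynomial.finset_sum_coeff]
      refine Finset.sum_eq_zero (fun j hj => ?_)
      refine Polynomial.coeff_eq_zero_of_natDegree_lt ?_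
      refine lt_of_le_of_lt (Polynomial.natDegree_C_mul_le _ _) (hTdeg' j hj)
    have h2 : (T ℝ (n:ℤ)).coeff n = 2^(n-1) := by
      rw [(achieser_T_aux n).2, if_neg (by omega)]
    rw [h1, h2, zero_add]
    field_simp
  have hdegle : P.natDegree ≤ n := by
    rw [hP]
    refine le_trans (Polynomial.natDegree_C_mul_le _ _) ?_
    refine le_trans (Polynomial.natDegree_sum_le _ _) ?_
    refine (Finset.fold_max_le n).mpr ⟨by omega, fun j hj => ?_⟩
    exact le_trans (Polynomial.natDegree_C_mul_le _ _) (hTdeg j hj)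
  have hmonic : P.Monic := Polynomial.monic_of_natDegree_le_of_coeff_eq_one n hdegle hcoeffn
  have hdeg : P.natDegree = n := le_antisymm hdegle
    (Polynomial.le_natDegree_of_ne_zero (by rw [hcoeffn]; norm_num))
  refine ⟨P, hmonic, hdeg, fun θ => ?_⟩
  -- evaluation
  have heval : P.eval (Real.cos θ) = ((2:ℝ)^(n-1))⁻¹ *
      ∑ j ∈ Finset.range (N+1), hp.coeff j * Real.cos ((((n:ℤ) - N + j : ℤ) : ℝ) * θ) := by
    rw [hP]
    simp only [Polynomial.eval_mul, Polynomial.eval_C, Polynomial.eval_finset_sum]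
    congr 1
    refine Finset.sum_congr rfl (fun j hj => ?_)
    rw [Polynomial.Chebyshev.T_real_cos]
  rw [heval]
  congr 1
  -- now the complex identity
  set z : ℂ := Complex.exp ((θ:ℂ) * Complex.I) with hz
  have hzne : z ≠ 0 := Complex.exp_ne_zero _
  set u : Fin N → ℂ := fun k => 1 - (r k : ℂ) * Complex.exp (-(θ:ℂ) * Complex.I) with hu
  -- step 1: the sum equals the real part of z^(n-N) * ∏ (z - r k)
  have hcos : ∀ p : ℤ, Real.cos ((p:ℝ) * θ) = (z ^ p).re := by
    intro p
    rw [hz, ← Complex.exp_int_mul]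
    rw [show ((p:ℂ) * ((θ:ℂ) * Complex.I)) = ((p * θ : ℝ) : ℂ) * Complex.I by push_cast; ring]
    rw [Complex.exp_ofReal_mul_I_re]
  have hstep1 : ∑ j ∈ Finset.range (N+1), hp.coeff j * Real.cos ((((n:ℤ) - N + j : ℤ) : ℝ) * θ)
      = (z ^ ((n:ℤ) - N) * ∏ k, (z - (r k : ℂ))).re := by
    have hprod : (∏ k, (z - (r k : ℂ))) = ∑ j ∈ Finset.range (N+1), (hp.coeff j : ℂ) * z ^ j := by
      have hmap : (hp.map (algebraMap ℝ ℂ)) = ∏ k, (X - C ((r k : ℂ))) := by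
        rw [hhp, Polynomial.map_prod]
        refine Finset.prod_congr rfl (fun k _ => ?_)
        simp
      have h1 : (∏ k, (z - (r k : ℂ))) = (hp.map (algebraMap ℝ ℂ)).eval z := by
        rw [hmap, Polynomial.eval_prod]
        refine Finset.prod_congr rfl (fun k _ => ?_)
        simp
      rw [h1, Polynomial.eval_eq_sum_range]
      have hdm : (hp.map (algebraMap ℝ ℂ)).natDegree = N := by
        rw [Polynomial.natDegree_map_eq_of_injective (algebraMap ℝ ℂ).injective, hpdeg]
      rw [hdm]
      refine Finset.sum_congr rfl (fun j hj => ?_)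
      rw [Polynomial.coeff_map]
      rfl
    rw [hprod, Finset.mul_sum]
    rw [Complex.re_sum]
    refine Finset.sum_congr rfl (fun j hj => ?_)
    rw [hcos ((n:ℤ) - N + j)]
    have : z ^ ((n:ℤ) - N) * ((hp.coeff j : ℂ) * z ^ j) = (hp.coeff j : ℂ) * z ^ ((n:ℤ) - N + j) := by
      rw [zpow_add₀ hzne, zpow_natCast]
      ring
    rw [this, Complex.re_ofReal_mul]
  rw [hstep1]
  -- step 2: z^(n-N) * ∏ (z - r k) = z^n * ∏ u k
  have hstep2 : z ^ ((n:ℤ) - N) * ∏ k, (z - (r k : ℂ)) = z ^ (n:ℤ) * ∏ k, u k := by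
    have hzinv : Complex.exp (-(θ:ℂ) * Complex.I) = z⁻¹ := by
      rw [hz, ← Complex.exp_neg]
      ring_nf
    have hfac : ∀ k, z - (r k : ℂ) = z * u k := by
      intro k
      rw [hu]
      simp only
      rw [hzinv, mul_sub, mul_one, mul_comm ((r k : ℂ)) z⁻¹, ← mul_assoc,
        mul_inv_cancel₀ hzne, one_mul]
    rw [Finset.prod_congr rfl (fun k _ => hfac k), Finset.prod_mul_distrib,
      Finset.prod_const, Finset.card_univ, Fintype.card_fin]
    rw [← mul_assoc]
    congr 1
    rw [← zpow_natCast z N, ← zpow_add₀ hzne]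
    congr 1
    omega
  rw [hstep2]
  have hpolar : ∀ k, u k = ((‖u k‖ : ℝ) : ℂ) *
      Complex.exp (((Complex.arg (u k) : ℝ) : ℂ) * Complex.I) := fun k =>
    (Complex.norm_mul_exp_arg_mul_I (u k)).symm
  have h1 : ∏ k, u k = ((∏ k, ‖u k‖ : ℝ) : ℂ) *
      Complex.exp (((∑ k, (u k).arg : ℝ) : ℂ) * Complex.I) := by
    calc ∏ k, u k = ∏ k, (((‖u k‖ : ℝ) : ℂ) *
          Complex.exp (((u k).arg : ℂ) * Complex.I)) :=
        Finset.prod_congr rfl (fun k _ => hpolar k)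
      _ = _ := by
        rw [Finset.prod_mul_distrib,
          ← Complex.exp_sum Finset.univ (fun k => ((u k).arg : ℂ) * Complex.I),
          ← Finset.sum_mul]
        congr 2 <;> (push_cast; try ring)
  have h2 : z ^ (n:ℤ) = Complex.exp ((((n:ℝ) * θ : ℝ) : ℂ) * Complex.I) := by
    rw [hz, ← Complex.exp_int_mul]; congr 1; push_cast; ring
  rw [h1, h2]
  have h3 : Complex.exp ((((n:ℝ) * θ : ℝ) : ℂ) * Complex.I) *
      (((∏ k, ‖u k‖ : ℝ) : ℂ) *
        Complex.exp (((∑ k, (u k).arg : ℝ) : ℂ) * Complex.I)) =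
      ((∏ k, ‖u k‖ : ℝ) : ℂ) *
        Complex.exp ((((n:ℝ) * θ + ∑ k, (u k).arg : ℝ) : ℂ) * Complex.I) := by
    have hcomm : Complex.exp ((((n:ℝ) * θ : ℝ) : ℂ) * Complex.I) *
        (((∏ k, ‖u k‖ : ℝ) : ℂ) *
          Complex.exp (((∑ k, (u k).arg : ℝ) : ℂ) * Complex.I)) =
        ((∏ k, ‖u k‖ : ℝ) : ℂ) *
          (Complex.exp ((((n:ℝ) * θ : ℝ) : ℂ) * Complex.I) *
            Complex.exp (((∑ k, (u k).arg : ℝ) : ℂ) * Complex.I)) := by ring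
    rw [hcomm, ← Complex.exp_add]
    congr 2 <;> (push_cast; try ring)
  rw [h3, Complex.re_ofReal_mul, Complex.exp_ofReal_mul_I_re]


/-- The `n`-th weighted Chebyshev norm on `[-1,1]` for a weight `w`:
the infimum of `sup_{x ∈ [-1,1]} w(x) |P(x)|` over monic real polynomials `P`
of degree `n`. -/
noncomputable def wChebNorm (w : ℝ → ℝ) (n : ℕ) : ℝ :=
  sInf { r : ℝ | ∃ P : Polynomial ℝ, P.Monic ∧ P.natDegree = n ∧
    r = ⨆ x ∈ Set.Icc (-1 : ℝ) 1, w x * |P.eval x| }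

/-- Achieser's explicit formula for the weighted Chebyshev norm with weight
`w(x) = ∏_{k=1}^{2m} (1 - x/a_k)^{-1/2}`, `|a_k| > 1`. -/
theorem achieser_norm_formula (m : ℕ) (hm : 1 ≤ m)
    (a : Fin (2 * m) → ℝ) (ha : ∀ k, 1 < |a k|)
    (w : ℝ → ℝ) (hw : ∀ x, w x = ∏ k, (1 - x / a k) ^ (-(1 : ℝ) / 2))
    (n : ℕ) (hn : m < n) :
    wChebNorm w n = (2 : ℝ) ^ (1 - (n : ℝ)) *
      Real.exp ((1 / Real.pi) *
        ∫ x in (-1 : ℝ)..1, Real.log (w x) / Real.sqrt (1 - x ^ 2)) := by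
  classical
  have hπ := Real.pi_pos
  have hn1 : 1 ≤ n := by omega
  -- choose the r-parameters
  choose r hr1 hr2 using fun k => achieser_exists_r (a k) (ha k)
  set c : ℝ := ∏ k, Real.sqrt (1 + (r k)^2) with hc
  have hcpos : 0 < c := Finset.prod_pos (fun k _ => Real.sqrt_pos.mpr (by positivity))
  set κ : ℝ := ((2:ℝ)^(n-1))⁻¹ with hκ
  have hκpos : 0 < κ := by positivity
  set L : ℝ := κ * c with hL
  have hLpos : 0 < L := mul_pos hκpos hcpos
  obtain ⟨P, hPmonic, hPdeg, hPeval⟩ := achieser_key (2*m) n hn1 (by omega) r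
  -- weight on [-1,1]
  have hqpos : ∀ (k : Fin (2*m)) (θ : ℝ), 0 < 1 - 2*(r k)*Real.cos θ + (r k)^2 :=
    fun k θ => achieser_q_pos' (hr1 k) θ
  have hwcos : ∀ θ : ℝ, w (Real.cos θ) =
      ∏ k, (Real.sqrt (1 + (r k)^2) / Real.sqrt (1 - 2*(r k)*Real.cos θ + (r k)^2)) := by
    intro θ
    rw [hw]
    refine Finset.prod_congr rfl (fun k _ => ?_)
    rw [achieser_weight_factor (hr1 k) (hr2 k) (Real.cos θ)]
    exact achieser_rpow_factor (hqpos k θ) (by positivity)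
  set ρf : ℝ → ℝ := fun θ => ∏ k, ‖1 - (r k : ℂ) * Complex.exp (-(θ:ℂ) * Complex.I)‖
    with hρf
  have hρeq : ∀ θ, ρf θ = ∏ k, Real.sqrt (1 - 2*(r k)*Real.cos θ + (r k)^2) := by
    intro θ
    exact Finset.prod_congr rfl (fun k _ => achieser_abs_factor (r k) θ)
  have hwρ : ∀ θ, w (Real.cos θ) * ρf θ = c := by
    intro θ
    rw [hwcos θ, hρeq θ, ← Finset.prod_mul_distrib, hc]
    refine Finset.prod_congr rfl (fun k _ => ?_)
    rw [div_mul_cancel₀]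
    exact ne_of_gt (Real.sqrt_pos.mpr (hqpos k θ))
  set ψ : ℝ → ℝ := fun θ => (n:ℝ) * θ + ∑ k, Complex.arg (1 - (r k : ℂ) *
    Complex.exp (-(θ:ℂ) * Complex.I)) with hψ
  -- the central identity
  have hkey : ∀ θ : ℝ, w (Real.cos θ) * P.eval (Real.cos θ) = L * Real.cos (ψ θ) := by
    intro θ
    rw [hPeval θ]
    have : w (Real.cos θ) * (κ * (ρf θ * Real.cos (ψ θ)))
        = κ * ((w (Real.cos θ) * ρf θ) * Real.cos (ψ θ)) := by ring
    rw [this, hwρ θ, hL]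
    ring
  -- positivity and continuity of w on [-1,1]
  have hwpos : ∀ x ∈ Icc (-1:ℝ) 1, 0 < w x := by
    intro x hx
    rw [hw]
    refine Finset.prod_pos (fun k _ => Real.rpow_pos_of_pos ?_ _)
    rw [achieser_weight_factor (hr1 k) (hr2 k) x]
    have := achieser_q_pos (hr1 k) hx.1 hx.2
    positivity
  have hwcont : ContinuousOn w (Icc (-1:ℝ) 1) := by
    have : ContinuousOn (fun x => ∏ k : Fin (2*m), (1 - x / a k) ^ (-(1:ℝ)/2)) (Icc (-1:ℝ) 1) := by
      refine continuousOn_finset_prod _ (fun k _ => ?_)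
      have ha0 : a k ≠ 0 := by
        have := ha k
        intro h; rw [h, abs_zero] at this; linarith
      intro x hx
      have hbase : 1 - x / a k ≠ 0 := by
        rw [achieser_weight_factor (hr1 k) (hr2 k) x]
        have := achieser_q_pos (hr1 k) hx.1 hx.2
        positivity
      exact (ContinuousAt.comp (f := fun x : ℝ => 1 - x / a k)
        (Real.continuousAt_rpow_const _ _ (Or.inl hbase))
        (by fun_prop : Continuous fun x : ℝ => 1 - x / a k).continuousAt).continuousWithinAt
    exact this.congr (fun x _ => hw x)
  -- continuity of ψ and endpoint values
  have hψcont : Continuous ψ := by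
    rw [hψ]
    refine (continuous_const.mul continuous_id).add ?_
    exact continuous_finset_sum _ (fun k _ => achieser_arg_continuous (hr1 k))
  have hψ0 : ψ 0 = 0 := by
    rw [hψ]
    simp only [mul_zero, zero_add]
    rw [show ((0:ℝ):ℂ) = ((0:ℝ):ℂ) from rfl]
    rw [Finset.sum_eq_zero (fun k _ => achieser_arg_zero (hr1 k))]
  have hψπ : ψ π = n * π := by
    show (n:ℝ) * π + _ = n * π
    rw [Finset.sum_eq_zero (fun k _ => achieser_arg_pi (hr1 k))]
    ring
  -- hitting times
  obtain ⟨t, htmem, htmono⟩ := achieser_hitting ψ hψcont.continuousOn n hψ0 hψπ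
  set u : ℕ → ℝ := fun k => Real.cos (t k) with hu
  have humem : ∀ k, u k ∈ Icc (-1:ℝ) 1 := fun k => ⟨Real.neg_one_le_cos _, Real.cos_le_one _⟩
  have hueq : ∀ k ≤ n, w (u k) * P.eval (u k) = L * (-1)^k := by
    intro k hk
    rw [hu]
    rw [hkey (t k), (htmem k hk).2]
    congr 1
    simpa using Real.cos_nat_mul_pi_sub 0 k
  have hudec : ∀ k j, k < j → j ≤ n → u j < u k := by
    intro k j hkj hj
    rw [hu]
    have h1 := (htmem k (le_trans (le_of_lt hkj) hj)).1
    have h2 := (htmem j hj).1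
    exact Real.strictAntiOn_cos ⟨h1.1, h1.2⟩ ⟨h2.1, h2.2⟩ (htmono k j hkj hj)
  -- the bound w|P| ≤ L on [-1,1]
  have hbound : ∀ x ∈ Icc (-1:ℝ) 1, w x * |P.eval x| ≤ L := by
    intro x hx
    set θ := Real.arccos x with hθ
    have hcosθ : Real.cos θ = x := Real.cos_arccos hx.1 hx.2
    have h := hkey θ
    rw [hcosθ] at h
    have hw0 : 0 ≤ w x := le_of_lt (hwpos x hx)
    calc w x * |P.eval x| = |w x * P.eval x| := by
          rw [_root_.abs_mul, _root_.abs_of_nonneg hw0]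
      _ = |L * Real.cos (ψ θ)| := by rw [h]
      _ = L * |Real.cos (ψ θ)| := by rw [_root_.abs_mul, _root_.abs_of_pos hLpos]
      _ ≤ L * 1 := by
          exact mul_le_mul_of_nonneg_left (Real.abs_cos_le_one _) (le_of_lt hLpos)
      _ = L := mul_one L
  -- the sup for P equals L
  set S : Set ℝ := { s : ℝ | ∃ P : Polynomial ℝ, P.Monic ∧ P.natDegree = n ∧
    s = ⨆ x ∈ Set.Icc (-1 : ℝ) 1, w x * |P.eval x| } with hS
  have hfP : ContinuousOn (fun x => w x * |P.eval x|) (Icc (-1:ℝ) 1) :=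
    hwcont.mul (Continuous.continuousOn (by fun_prop))
  have hfP0 : ∀ x ∈ Icc (-1:ℝ) 1, 0 ≤ w x * |P.eval x| :=
    fun x hx => mul_nonneg (le_of_lt (hwpos x hx)) (abs_nonneg _)
  obtain ⟨x0, hx0, hsupP, hmaxP⟩ := achieser_ciSup_Icc _ hfP hfP0
  have hsupPL : (⨆ x ∈ Icc (-1:ℝ) 1, w x * |P.eval x|) = L := by
    rw [hsupP]
    refine le_antisymm (hbound x0 hx0) ?_
    have h0 := hueq 0 (by omega)
    simp only [pow_zero, mul_one] at h0
    have hwu := hwpos (u 0) (humem 0)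
    have hPu : 0 < P.eval (u 0) := by
      by_contra hcon
      push_neg at hcon
      nlinarith [mul_nonpos_of_nonneg_of_nonpos hwu.le hcon]
    have : w (u 0) * |P.eval (u 0)| = L := by
      rw [_root_.abs_of_pos hPu]
      exact h0
    calc L = w (u 0) * |P.eval (u 0)| := this.symm
      _ ≤ w x0 * |P.eval x0| := hmaxP (u 0) (humem 0)
  have hLmem : L ∈ S := ⟨P, hPmonic, hPdeg, hsupPL.symm⟩
  -- lower bound: every element of S is ≥ L
  have hlb : ∀ s ∈ S, L ≤ s := by
    rintro s ⟨Q, hQmonic, hQdeg, rfl⟩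
    by_contra hcon
    push_neg at hcon
    have hfQ : ContinuousOn (fun x => w x * |Q.eval x|) (Icc (-1:ℝ) 1) :=
      hwcont.mul (Continuous.continuousOn (by fun_prop))
    have hfQ0 : ∀ x ∈ Icc (-1:ℝ) 1, 0 ≤ w x * |Q.eval x| :=
      fun x hx => mul_nonneg (le_of_lt (hwpos x hx)) (abs_nonneg _)
    obtain ⟨x1, hx1, hsupQ, hmaxQ⟩ := achieser_ciSup_Icc _ hfQ hfQ0
    have hQlt : ∀ x ∈ Icc (-1:ℝ) 1, w x * |Q.eval x| < L :=
      fun x hx => lt_of_le_of_lt (le_trans (hmaxQ x hx) (le_of_eq hsupQ.symm)) hcon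
    have hPQ : P ≠ Q := by
      intro h
      rw [← h] at hsupQ
      have hQloc := hQlt x0 hx0
      have := hmaxP (u 0) (humem 0)
      -- sup over Q (=P) is L but hcon says < L
      have hx0L : w x0 * |P.eval x0| = L := by rw [← hsupP, hsupPL]
      have := hQlt x0 hx0
      rw [← h] at this
      rw [hx0L] at this
      exact lt_irrefl L this
    set R := P - Q with hR
    have hRne : R ≠ 0 := sub_ne_zero.mpr hPQ
    have hRdeg : R.natDegree < n := by
      rw [Polynomial.natDegree_lt_iff_degree_lt hRne]
      have hdd : P.degree = Q.degree := by
        rw [Polynomial.degree_eq_natDegree hPmonic.ne_zero,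
          Polynomial.degree_eq_natDegree hQmonic.ne_zero, hPdeg, hQdeg]
      have hll : P.leadingCoeff = Q.leadingCoeff := by
        rw [hPmonic.leadingCoeff, hQmonic.leadingCoeff]
      have hd := Polynomial.degree_sub_lt hdd hPmonic.ne_zero hll
      rw [Polynomial.degree_eq_natDegree hPmonic.ne_zero, hPdeg] at hd
      exact hd
    refine achieser_alternation R n hRdeg u hudec ?_
    intro k hk
    have h1 := hueq k hk
    have hwu := hwpos (u k) (humem k)
    have hQk := hQlt (u k) (humem k)
    have hQabs : |w (u k) * Q.eval (u k)| < L := by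
      rw [_root_.abs_mul, _root_.abs_of_pos hwu]; exact hQk
    have habs := abs_lt.mp hQabs
    have hsq : (-1:ℝ)^k * (-1:ℝ)^k = 1 := by
      rw [← pow_add]; exact Even.neg_one_pow ⟨k, by ring⟩
    have hRk : R.eval (u k) = P.eval (u k) - Q.eval (u k) := by
      rw [hR, Polynomial.eval_sub]
    have hsign : 0 < (-1:ℝ)^k * (w (u k) * R.eval (u k)) := by
      have heq : (-1:ℝ)^k * (w (u k) * R.eval (u k))
          = L - (-1:ℝ)^k * (w (u k) * Q.eval (u k)) := by
        rw [hRk]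
        linear_combination ((-1:ℝ)^k) * h1 + L * hsq
      rw [heq]
      have h2 : (-1:ℝ)^k * (w (u k) * Q.eval (u k)) ≤ |w (u k) * Q.eval (u k)| := by
        rcases neg_one_pow_eq_or ℝ k with hp | hp <;> rw [hp]
        · rw [one_mul]; exact le_abs_self _
        · rw [neg_one_mul]; exact neg_le_abs _
      linarith
    by_contra hcon2
    push_neg at hcon2
    have hmp := mul_nonpos_of_nonneg_of_nonpos hwu.le hcon2
    have heq2 : w (u k) * ((-1:ℝ)^k * R.eval (u k))
        = (-1:ℝ)^k * (w (u k) * R.eval (u k)) := by ring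
    rw [heq2] at hmp
    linarith
  -- conclude for the Chebyshev norm
  have hnorm : wChebNorm w n = L := by
    rw [wChebNorm]
    refine le_antisymm (csInf_le ⟨L, hlb⟩ hLmem) (le_csInf ⟨L, hLmem⟩ hlb)
  rw [hnorm]
  -- now evaluate the integral
  have hInt : (∫ x in (-1:ℝ)..1, Real.log (w x) / Real.sqrt (1 - x^2)) = π * Real.log c := by
    have hms : MeasurableSet (Ioo (0:ℝ) π) := measurableSet_Ioo
    have hderiv : ∀ θ ∈ Ioo (0:ℝ) π, HasDerivWithinAt Real.cos (-Real.sin θ) (Ioo 0 π) θ :=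
      fun θ _ => (Real.hasDerivAt_cos θ).hasDerivWithinAt
    have hinj : InjOn Real.cos (Ioo 0 π) := Real.injOn_cos.mono Ioo_subset_Icc_self
    have hcov := MeasureTheory.integral_image_eq_integral_abs_deriv_smul hms hderiv hinj
      (fun x => Real.log (w x) / Real.sqrt (1 - x^2))
    rw [achieser_cos_image] at hcov
    have hpt : ∀ θ ∈ Ioo (0:ℝ) π,
        |(-Real.sin θ)| • (Real.log (w (Real.cos θ)) / Real.sqrt (1 - (Real.cos θ)^2))
        = Real.log (w (Real.cos θ)) := by
      intro θ hθ
      have hs : 0 < Real.sin θ := Real.sin_pos_of_pos_of_lt_pi hθ.1 hθ.2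
      have hsq1 : Real.sqrt (1 - (Real.cos θ)^2) = Real.sin θ := by
        rw [show 1 - (Real.cos θ)^2 = (Real.sin θ)^2 by nlinarith [Real.sin_sq_add_cos_sq θ],
          Real.sqrt_sq hs.le]
      rw [smul_eq_mul, hsq1, abs_neg, _root_.abs_of_pos hs]
      field_simp
    have h2 : (∫ x in Ioo (-1:ℝ) 1, Real.log (w x) / Real.sqrt (1 - x^2))
        = ∫ θ in Ioo (0:ℝ) π, Real.log (w (Real.cos θ)) := by
      rw [hcov]
      exact MeasureTheory.setIntegral_congr_fun hms (fun θ hθ => hpt θ hθ)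
    have h3 : (∫ x in (-1:ℝ)..1, Real.log (w x) / Real.sqrt (1 - x^2))
        = ∫ x in Ioo (-1:ℝ) 1, Real.log (w x) / Real.sqrt (1 - x^2) := by
      rw [intervalIntegral.integral_of_le (by norm_num : (-1:ℝ) ≤ 1),
        MeasureTheory.integral_Ioc_eq_integral_Ioo]
    have h4 : (∫ θ in Ioo (0:ℝ) π, Real.log (w (Real.cos θ)))
        = ∫ θ in (0:ℝ)..π, Real.log (w (Real.cos θ)) := by
      rw [intervalIntegral.integral_of_le hπ.le, MeasureTheory.integral_Ioc_eq_integral_Ioo]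
    rw [h3, h2, h4]
    have h5 : ∀ θ : ℝ, Real.log (w (Real.cos θ)) = ∑ k, (Real.log (Real.sqrt (1 + (r k)^2))
        - (1/2) * Real.log (1 - 2*(r k)*Real.cos θ + (r k)^2)) := by
      intro θ
      rw [hwcos θ, Real.log_prod]
      · refine Finset.sum_congr rfl (fun k _ => ?_)
        rw [Real.log_div (by positivity) (ne_of_gt (Real.sqrt_pos.mpr (hqpos k θ)))]
        congr 1
        rw [Real.log_sqrt (hqpos k θ).le]
        ring
      · intro k _
        have := hqpos k θ
        positivity
    have h6 : (∫ θ in (0:ℝ)..π, Real.log (w (Real.cos θ)))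
        = ∑ k, ((∫ θ in (0:ℝ)..π, (Real.log (Real.sqrt (1 + (r k)^2))
            - (1/2) * Real.log (1 - 2*(r k)*Real.cos θ + (r k)^2)))) := by
      rw [intervalIntegral.integral_congr (fun θ _ => h5 θ)]
      refine intervalIntegral.integral_finset_sum (fun k _ => ?_)
      exact (intervalIntegrable_const).sub
        ((continuous_const.mul (Iach_cont (hr1 k))).intervalIntegrable _ _)
    rw [h6]
    have h7 : ∀ k : Fin (2*m), (∫ θ in (0:ℝ)..π, (Real.log (Real.sqrt (1 + (r k)^2))
        - (1/2) * Real.log (1 - 2*(r k)*Real.cos θ + (r k)^2)))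
        = π * Real.log (Real.sqrt (1 + (r k)^2)) := by
      intro k
      rw [intervalIntegral.integral_sub (g := fun θ => (1/2:ℝ) * Real.log (1 - 2*(r k)*Real.cos θ + (r k)^2))
        intervalIntegrable_const
        ((continuous_const.mul (Iach_cont (hr1 k))).intervalIntegrable _ _)]
      rw [intervalIntegral.integral_const, intervalIntegral.integral_const_mul]
      have h0 : (∫ θ in (0:ℝ)..π, Real.log (1 - 2*(r k)*Real.cos θ + (r k)^2)) = 0 :=
        Iach_eq_zero (hr1 k)
      rw [h0]
      simp [smul_eq_mul]
    rw [Finset.sum_congr rfl (fun k _ => h7 k), ← Finset.mul_sum, hc,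
      Real.log_prod (s := Finset.univ) (f := fun k => Real.sqrt (1 + (r k)^2)) (fun k _ => by positivity)]
  rw [hInt]
  have h8 : Real.exp ((1/π) * (π * Real.log c)) = c := by
    rw [show (1/π) * (π * Real.log c) = Real.log c by field_simp, Real.exp_log hcpos]
  rw [h8]
  have h9 : (2:ℝ) ^ (1 - (n:ℝ)) = κ := by
    rw [show (1 - (n:ℝ)) = ((1 - (n:ℤ) : ℤ) : ℝ) by push_cast; ring, Real.rpow_intCast]
    rw [show (1 - (n:ℤ)) = -(((n-1:ℕ)):ℤ) by omega]
    rw [zpow_neg, zpow_natCast, hκ]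
  rw [h9, hL]
end

section
/- For every z ∈ ℂ and every w ∈ ℂ with w² = z² − 1, one has (1/π) ∫_{−1}^{1} log|x − z| / √(1 − x²) dx = log( max(|z + w|, |z − w|) / 2 ). In particular, for z in the real interval [−1,1] the integral is constantly equal to −log 2. -/
open MeasureTheory Set Real intervalIntegral Complex Metric

noncomputable section

namespace ArcsinePot

lemma jordan {x : ℝ} (hx0 : 0 ≤ x) (hx : x ≤ π/2) : 2/π * x ≤ Real.sin x := by
  have hπ := Real.pi_pos
  have hconc := strictConcaveOn_sin_Icc.concaveOn
  have h0 : (0:ℝ) ∈ Set.Icc (0:ℝ) π := by constructor <;> linarith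
  have h2 : π/2 ∈ Set.Icc (0:ℝ) π := by constructor <;> linarith
  set t := 2/π * x with ht
  have ht0 : 0 ≤ t := by positivity
  have ht1 : t ≤ 1 := by
    rw [ht, div_mul_eq_mul_div, mul_comm, div_le_one hπ]; linarith
  have := hconc.2 h0 h2 (by linarith : (0:ℝ) ≤ 1 - t) ht0 (by ring)
  simp only [smul_eq_mul, mul_zero, Real.sin_zero, Real.sin_pi_div_two, mul_one, zero_add] at this
  have hx' : t * (π/2) = x := by rw [ht]; field_simp
  rw [hx'] at this; linarith

lemma integrableOn_log_Ioc {b : ℝ} (hb : 0 < b) : IntegrableOn Real.log (Set.Ioc 0 b) := by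
  have h1 : IntegrableOn Real.log (Set.Ioc (0:ℝ) 1) := by
    have h : IntegrableOn (fun x => -Real.log x) (Set.Ioc (0:ℝ) 1) := by
      apply intervalIntegral.integrableOn_deriv_of_nonneg (g := fun x => x - x * Real.log x)
      · exact (continuous_id.sub Real.continuous_mul_log).continuousOn
      · intro x hx
        have h1 : HasDerivAt (fun x : ℝ => x - x * Real.log x)
            (1 - (1 * Real.log x + x * x⁻¹)) x :=
          (hasDerivAt_id x).sub ((hasDerivAt_id x).mul (Real.hasDerivAt_log (ne_of_gt hx.1)))
        convert h1 using 1
        rw [mul_inv_cancel₀ (ne_of_gt hx.1)]; ring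
      · intro x hx
        simpa using Real.log_nonpos hx.1.le hx.2.le
    have h2 : IntegrableOn (fun x => -(-Real.log x)) (Set.Ioc (0:ℝ) 1) := h.neg
    simpa using h2
  have h2 : IntegrableOn Real.log (Set.Icc (1/2 : ℝ) (max 1 b)) := by
    apply ContinuousOn.integrableOn_Icc
    apply Real.continuousOn_log.mono
    intro x hx
    simp only [mem_compl_iff, mem_singleton_iff]
    have := hx.1; intro h; rw [h] at this; norm_num at this
  apply (h1.union h2).mono_set
  intro x hx
  rcases lt_or_ge x 1 with h | h
  · exact Or.inl ⟨hx.1, h.le⟩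
  · exact Or.inr ⟨by linarith, le_max_of_le_right hx.2⟩


noncomputable def gg (θ : ℝ) : ℝ := Real.log (2 * Real.sin (θ / 2))

lemma gg_refl (θ : ℝ) : gg (2*π - θ) = gg θ := by
  unfold gg
  rw [show (2*π - θ)/2 = π - θ/2 by ring, Real.sin_pi_sub]

lemma gg_integrableOn_Ioc : IntegrableOn gg (Set.Ioc 0 π) := by
  have hπ := Real.pi_pos
  have hcont : ContinuousOn gg (Set.Ioc 0 π) := by
    apply ContinuousOn.log
    · fun_prop
    · intro θ hθ
      have : 0 < Real.sin (θ/2) :=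
        Real.sin_pos_of_pos_of_lt_pi (by linarith [hθ.1]) (by linarith [hθ.2])
      positivity
  apply Integrable.mono' (g := fun θ => |Real.log θ| + Real.log π)
  · exact ((integrableOn_log_Ioc hπ).abs.add (integrableOn_const measure_Ioc_lt_top.ne))
  · exact hcont.aestronglyMeasurable measurableSet_Ioc
  · rw [ae_restrict_iff' measurableSet_Ioc]
    filter_upwards with θ hθ
    obtain ⟨hθ0, hθπ⟩ := hθ
    have hs : 0 < Real.sin (θ/2) :=
      Real.sin_pos_of_pos_of_lt_pi (by linarith) (by linarith)
    have hup : 2 * Real.sin (θ/2) ≤ θ := by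
      have := Real.sin_le (by linarith : 0 ≤ θ/2)
      linarith
    have hlow : θ/π ≤ 2 * Real.sin (θ/2) := by
      have := jordan (by linarith : (0:ℝ) ≤ θ/2) (by linarith : θ/2 ≤ π/2)
      have h2 : 2/π * (θ/2) = θ/π := by field_simp
      rw [h2] at this; linarith
    have hlogπ : 0 ≤ Real.log π := Real.log_nonneg (by linarith [Real.pi_gt_three])
    have h1 : gg θ ≤ Real.log θ := by
      unfold gg
      exact Real.log_le_log (by positivity) hup
    have h2 : Real.log θ - Real.log π ≤ gg θ := by
      unfold gg
      rw [← Real.log_div (ne_of_gt hθ0) (ne_of_gt hπ)]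
      apply Real.log_le_log (by positivity) hlow
    rw [Real.norm_eq_abs, abs_le]
    constructor
    · have := neg_abs_le (Real.log θ); linarith
    · have := le_abs_self (Real.log θ); linarith

lemma gg_intervalIntegrable : IntervalIntegrable gg volume 0 (2*π) := by
  have hπ := Real.pi_pos
  have h1 : IntervalIntegrable gg volume 0 π :=
    (intervalIntegrable_iff_integrableOn_Ioc_of_le hπ.le).2 gg_integrableOn_Ioc
  have h2 : IntervalIntegrable gg volume π (2*π) := by
    have h3 := (h1.comp_sub_left (2*π)).symm
    have heq : (fun x => gg (2*π - x)) = gg := funext gg_refl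
    rw [heq, show 2*π - π = π by ring, show 2*π - 0 = 2*π by ring] at h3
    exact h3
  exact h1.trans h2

lemma integral_gg : ∫ θ in (0:ℝ)..(2*π), gg θ = 0 := by
  have hπ := Real.pi_pos
  have h1 : IntervalIntegrable gg volume 0 π :=
    (intervalIntegrable_iff_integrableOn_Ioc_of_le hπ.le).2 gg_integrableOn_Ioc
  have h2 : IntervalIntegrable gg volume π (2*π) := by
    have h3 := (h1.comp_sub_left (2*π)).symm
    have heq : (fun x => gg (2*π - x)) = gg := funext gg_refl
    rw [heq, show 2*π - π = π by ring, show 2*π - 0 = 2*π by ring] at h3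
    exact h3
  set J := ∫ θ in (0:ℝ)..(2*π), gg θ with hJ
  set P := ∫ θ in (0:ℝ)..π, gg θ with hP
  have hrefl : ∫ θ in π..(2*π), gg θ = P := by
    have h3 := integral_comp_sub_left (a := (0:ℝ)) (b := π) gg (2*π)
    simp only [gg_refl] at h3
    rw [show 2*π - π = π by ring, show 2*π - 0 = 2*π by ring] at h3
    rw [hP, ← h3]
  have hJ2P : J = P + P := by
    rw [hJ, ← integral_add_adjacent_intervals h1 h2, hrefl, hP]
  have hmul : ∫ u in (0:ℝ)..π, gg (2*u) = (2:ℝ)⁻¹ • J := by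
    rw [integral_comp_mul_left gg (two_ne_zero)]
    norm_num
    exact hJ.symm
  have hsum : ∫ u in (0:ℝ)..π, gg (2*u) = ∫ u in (0:ℝ)..π, (gg u + gg (π - u)) := by
    apply intervalIntegral.integral_congr_ae
    have hne : ∀ᵐ (x : ℝ), x ≠ π := by
      refine (MeasureTheory.ae_iff).2 ?_
      simpa using Real.volume_singleton (a := π)
    filter_upwards [hne] with u hu hmem
    rw [uIoc_of_le hπ.le] at hmem
    have hu0 : 0 < u := hmem.1
    have huπ : u < π := lt_of_le_of_ne hmem.2 hu
    have hs : 0 < Real.sin (u/2) :=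
      Real.sin_pos_of_pos_of_lt_pi (by linarith) (by linarith)
    have hc : 0 < Real.cos (u/2) :=
      Real.cos_pos_of_mem_Ioo ⟨by linarith [Real.pi_pos], by linarith⟩
    unfold gg
    rw [show (π - u)/2 = π/2 - u/2 by ring, Real.sin_pi_div_two_sub]
    rw [← Real.log_mul (by positivity) (by positivity)]
    congr 1
    rw [show (2*u)/2 = 2*(u/2) by ring, Real.sin_two_mul]
    ring
  have hcompint : IntervalIntegrable (fun u => gg (π - u)) volume 0 π := by
    have := (h1.comp_sub_left π).symm
    convert this using 2 <;> simp
  have hsum2 : ∫ u in (0:ℝ)..π, (gg u + gg (π - u)) = P + P := by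
    rw [integral_add h1 hcompint, hP]
    congr 1
    have := integral_comp_sub_left (a := (0:ℝ)) (b := π) gg π
    simpa using this
  have h14 : (2:ℝ)⁻¹ • J = P + P := by
    rw [← hmul, hsum, hsum2]
  rw [smul_eq_mul] at h14
  rw [hJ2P] at h14 ⊢
  linarith


lemma contexp : Continuous (fun θ : ℝ => Complex.exp (θ * Complex.I)) := by fun_prop

lemma meanvalue {b : ℂ} (hb : ‖b‖ < 1) :
    ∫ θ in (0:ℝ)..(2*π), Real.log (‖1 - b * Complex.exp (θ * Complex.I)‖) = 0 := by
  set F : ℂ → ℂ := fun w => Complex.log (1 - b * w) with hF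
  have hmem : ∀ w : ℂ, ‖w‖ ≤ 1 → (1 - b * w) ∈ Complex.slitPlane := by
    intro w hw
    apply Complex.mem_slitPlane_iff.2
    left
    have h1 : (b * w).re ≤ ‖b * w‖ := Complex.re_le_norm _
    have h2 : ‖b * w‖ < 1 := by
      rw [norm_mul]
      calc ‖b‖ * ‖w‖ ≤ ‖b‖ * 1 :=
            mul_le_mul_of_nonneg_left hw (norm_nonneg b)
        _ < 1 := by simpa using hb
    simp only [Complex.sub_re, Complex.one_re]
    linarith
  have hdiff : DiffContOnCl ℂ F (ball (0:ℂ) 1) := by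
    apply DifferentiableOn.diffContOnCl
    rw [closure_ball (0:ℂ) one_ne_zero]
    intro w hw
    have hin : DifferentiableAt ℂ (fun w : ℂ => 1 - b * w) w :=
      (differentiableAt_const _).sub (differentiableAt_id.const_mul b)
    have : DifferentiableAt ℂ (Complex.log ∘ fun w : ℂ => 1 - b * w) w :=
      DifferentiableAt.comp w
        (Complex.differentiableAt_log (hmem w (by simpa [Complex.dist_eq] using hw))) hin
    exact this.differentiableWithinAt
  have hcauchy := hdiff.circleIntegral_sub_inv_smul (mem_ball_self one_pos)
  have hF0 : F 0 = 0 := by simp [hF]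
  rw [hF0, smul_zero] at hcauchy
  rw [circleIntegral] at hcauchy
  have hint : ∀ θ : ℝ, deriv (circleMap 0 1) θ • (circleMap 0 1 θ - 0)⁻¹ • F (circleMap 0 1 θ)
      = Complex.I • F (Complex.exp (θ * Complex.I)) := by
    intro θ
    rw [deriv_circleMap, circleMap_zero]
    have hne : Complex.exp (θ * Complex.I) ≠ 0 := Complex.exp_ne_zero _
    simp only [smul_eq_mul, sub_zero, Complex.ofReal_one, one_mul]
    field_simp
  simp only [hint] at hcauchy
  have hcont : Continuous fun θ : ℝ => F (Complex.exp (θ * Complex.I)) := by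
    rw [continuous_iff_continuousAt]
    intro θ
    have h1 : ContinuousAt (fun θ : ℝ => (1:ℂ) - b * Complex.exp (θ * Complex.I)) θ := by fun_prop
    exact h1.clog (hmem _ (by simp [Complex.norm_exp_ofReal_mul_I]))
  have hII : IntervalIntegrable (fun θ : ℝ => F (Complex.exp (θ * Complex.I))) volume 0 (2*π) :=
    hcont.intervalIntegrable _ _
  have hzero : ∫ θ in (0:ℝ)..(2*π), F (Complex.exp (θ * Complex.I)) = 0 := by
    rw [intervalIntegral.integral_smul] at hcauchy
    exact (smul_eq_zero.1 hcauchy).resolve_left Complex.I_ne_zero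
  have hre : ∀ θ : ℝ, Real.log (‖1 - b * Complex.exp (θ * Complex.I)‖)
      = (Complex.reCLM) (F (Complex.exp (θ * Complex.I))) := by
    intro θ
    simp [hF, Complex.log_re]
  simp only [hre]
  rw [ContinuousLinearMap.intervalIntegral_comp_comm _ hII, hzero, map_zero]


lemma exp_conj_eq (θ : ℝ) :
    (starRingEnd ℂ) (Complex.exp (θ * Complex.I)) = Complex.exp (-(θ * Complex.I)) := by
  rw [← Complex.exp_conj]
  congr 1
  simp [Complex.conj_ofReal]

lemma abs_one_sub_conj (a : ℂ) (θ : ℝ) :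
    ‖1 - (starRingEnd ℂ) a * Complex.exp (θ * Complex.I)‖
      = ‖Complex.exp (θ * Complex.I) - a‖ := by
  have hkey : (1 : ℂ) - (starRingEnd ℂ) a * Complex.exp (θ * Complex.I)
      = Complex.exp (θ * Complex.I) * (starRingEnd ℂ) (Complex.exp (θ * Complex.I) - a) := by
    rw [map_sub, exp_conj_eq, mul_sub, ← Complex.exp_add]
    simp [mul_comm]
  rw [hkey, norm_mul, Complex.norm_exp_ofReal_mul_I, one_mul, Complex.norm_conj]

lemma abs_exp_sub_exp (θ φ : ℝ) :
    ‖Complex.exp (θ * Complex.I) - Complex.exp (φ * Complex.I)‖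
      = 2 * |Real.sin ((θ - φ)/2)| := by
  have key : ∀ u : ℂ, Complex.exp (u * Complex.I) - Complex.exp (-u * Complex.I)
      = 2 * Complex.sin u * Complex.I := by
    intro u
    rw [Complex.exp_mul_I, Complex.exp_mul_I, Complex.cos_neg, Complex.sin_neg]
    ring
  have hfac : Complex.exp (θ * Complex.I) - Complex.exp (φ * Complex.I)
      = Complex.exp ((((θ + φ)/2 : ℝ)) * Complex.I)
        * (2 * Complex.sin ((((θ - φ)/2 : ℝ) : ℂ)) * Complex.I) := by
    rw [← key, mul_sub, ← Complex.exp_add, ← Complex.exp_add]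
    congr 2 <;> · push_cast; ring
  rw [hfac, norm_mul, Complex.norm_exp_ofReal_mul_I, one_mul, norm_mul, norm_mul,
    Complex.norm_I, Complex.norm_two, ← Complex.ofReal_sin, Complex.norm_real, Real.norm_eq_abs, mul_one]

noncomputable def fa (a : ℂ) (θ : ℝ) : ℝ := Real.log (‖Complex.exp (θ * Complex.I) - a‖)
noncomputable def h0 (u : ℝ) : ℝ := Real.log (2 * |Real.sin (u/2)|)

lemma h0_periodic : Function.Periodic h0 (2*π) := by
  intro u
  unfold h0
  rw [show (u + 2*π)/2 = u/2 + π by ring, Real.sin_add_pi, abs_neg]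

lemma h0_eq_gg {θ : ℝ} (h : θ ∈ Set.Icc (0:ℝ) (2*π)) : h0 θ = gg θ := by
  unfold h0 gg
  rw [_root_.abs_of_nonneg (Real.sin_nonneg_of_nonneg_of_le_pi (by linarith [h.1]) (by linarith [h.2]))]

lemma h0_II : IntervalIntegrable h0 volume (-(2*π)) (4*π) := by
  have hπ := Real.pi_pos
  have h0II : IntervalIntegrable h0 volume 0 (2*π) := by
    have hgg := gg_intervalIntegrable
    rw [intervalIntegrable_iff_integrableOn_Ioc_of_le (by positivity)] at hgg ⊢
    exact hgg.congr_fun (fun θ hθ => (h0_eq_gg ⟨hθ.1.le, hθ.2⟩).symm) measurableSet_Ioc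
  have hleft : IntervalIntegrable h0 volume (-(2*π)) 0 := by
    have h := h0II.comp_add_right (2*π)
    have heq : (fun x => h0 (x + 2*π)) = h0 := funext fun x => h0_periodic x
    rw [heq, show (0:ℝ) - 2*π = -(2*π) by ring, show 2*π - 2*π = (0:ℝ) by ring] at h
    exact h
  have hright : IntervalIntegrable h0 volume (2*π) (4*π) := by
    have h := h0II.comp_sub_right (2*π)
    have heq : (fun x => h0 (x - 2*π)) = h0 := funext fun x => h0_periodic.sub_eq x
    rw [heq, show (0:ℝ) + 2*π = 2*π by ring, show 2*π + 2*π = 4*π by ring] at h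
    exact h
  exact (hleft.trans h0II).trans hright

lemma B (a : ℂ) : IntervalIntegrable (fa a) volume 0 (2*π) ∧
    ∫ θ in (0:ℝ)..(2*π), fa a θ = 2*π*Real.log (max (‖a‖) 1) := by
  have hπ := Real.pi_pos
  rcases lt_trichotomy (‖a‖) 1 with hlt | heq | hgt
  · -- |a| < 1
    have hpos : ∀ θ : ℝ, 0 < ‖Complex.exp (θ * Complex.I) - a‖ := by
      intro θ
      have h1 := norm_sub_norm_le (Complex.exp (θ * Complex.I)) a
      rw [Complex.norm_exp_ofReal_mul_I] at h1
      linarith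
    have hcont : Continuous (fa a) :=
      Continuous.log (continuous_norm.comp (contexp.sub continuous_const))
        fun θ => ne_of_gt (hpos θ)
    refine ⟨hcont.intervalIntegrable _ _, ?_⟩
    have heq2 : fa a = fun θ : ℝ =>
        Real.log (‖1 - (starRingEnd ℂ) a * Complex.exp (θ * Complex.I)‖) :=
      funext fun θ => by rw [fa, abs_one_sub_conj]
    rw [heq2, meanvalue (by rwa [Complex.norm_conj]), max_eq_right hlt.le, Real.log_one, mul_zero]
  · -- |a| = 1
    have ha : a = Complex.exp ((Complex.arg a : ℝ) * Complex.I) := by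
      conv_lhs => rw [← Complex.norm_mul_exp_arg_mul_I a]
      rw [heq]
      simp
    set φ := Complex.arg a with hφ
    have hfa : fa a = fun θ => h0 (θ - φ) := by
      funext θ
      rw [fa, h0]
      conv_lhs => rw [ha]
      rw [abs_exp_sub_exp]
    have hφ1 : -π < φ := Complex.neg_pi_lt_arg a
    have hφ2 : φ ≤ π := Complex.arg_le_pi a
    have hIIfa : IntervalIntegrable (fa a) volume 0 (2*π) := by
      rw [hfa]
      have h := h0_II.comp_sub_right φ
      apply h.mono_set
      apply Set.uIcc_subset_uIcc
      · rw [Set.mem_uIcc]; left; constructor <;> linarith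
      · rw [Set.mem_uIcc]; left; constructor <;> linarith
    refine ⟨hIIfa, ?_⟩
    rw [hfa]
    have h1 : ∫ θ in (0:ℝ)..(2*π), h0 (θ - φ) = ∫ θ in (-φ)..(2*π - φ), h0 θ := by
      have := intervalIntegral.integral_comp_sub_right (a := 0) (b := 2*π) h0 φ
      rwa [zero_sub] at this
    have h2 : ∫ θ in (-φ)..(2*π - φ), h0 θ = ∫ θ in (0:ℝ)..(2*π), h0 θ := by
      have := h0_periodic.intervalIntegral_add_eq (-φ) 0
      rw [show -φ + 2*π = 2*π - φ by ring, zero_add] at this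
      exact this
    have h3 : ∫ θ in (0:ℝ)..(2*π), h0 θ = ∫ θ in (0:ℝ)..(2*π), gg θ := by
      apply intervalIntegral.integral_congr
      intro θ hθ
      rw [Set.uIcc_of_le (by positivity)] at hθ
      exact h0_eq_gg hθ
    rw [h1, h2, h3, integral_gg, heq, max_self, Real.log_one, mul_zero]
  · -- 1 < |a|
    have ha0 : a ≠ 0 := by
      intro h; rw [h] at hgt; simp at hgt; linarith
    have hinv : ‖a⁻¹‖ < 1 := by
      rw [norm_inv]
      rw [inv_lt_one_iff₀]
      right; exact hgt
    have hpos2 : ∀ θ : ℝ, 0 < ‖1 - a⁻¹ * Complex.exp (θ * Complex.I)‖ := by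
      intro θ
      have h1 := norm_sub_norm_le (1:ℂ) (a⁻¹ * Complex.exp (θ * Complex.I))
      rw [norm_one, norm_mul,
        Complex.norm_exp_ofReal_mul_I, mul_one] at h1
      linarith
    have hfac : ∀ θ : ℝ, fa a θ
        = Real.log (‖a‖) + Real.log (‖1 - a⁻¹ * Complex.exp (θ * Complex.I)‖) := by
      intro θ
      rw [fa]
      have h1 : Complex.exp (θ * Complex.I) - a = (-a) * (1 - a⁻¹ * Complex.exp (θ * Complex.I)) := by
        field_simp
        ring
      rw [h1, norm_mul, norm_neg]
      rw [Real.log_mul (by positivity) (ne_of_gt (hpos2 θ))]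
    have hcont2 : Continuous fun θ : ℝ =>
        Real.log (‖1 - a⁻¹ * Complex.exp (θ * Complex.I)‖) :=
      Continuous.log (continuous_norm.comp (continuous_const.sub (continuous_const.mul contexp)))
        fun θ => ne_of_gt (hpos2 θ)
    have hIIfa : IntervalIntegrable (fa a) volume 0 (2*π) := by
      have : Continuous (fa a) := by
        have hc : Continuous fun θ : ℝ => Real.log (‖a‖)
            + Real.log (‖1 - a⁻¹ * Complex.exp (θ * Complex.I)‖) :=
          continuous_const.add hcont2
        rwa [show (fa a) = _ from funext hfac]
      exact this.intervalIntegrable _ _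
    refine ⟨hIIfa, ?_⟩
    have : ∫ θ in (0:ℝ)..(2*π), fa a θ
        = ∫ θ in (0:ℝ)..(2*π), (Real.log (‖a‖)
            + Real.log (‖1 - a⁻¹ * Complex.exp (θ * Complex.I)‖)) := by
      apply intervalIntegral.integral_congr
      intro θ _
      exact hfac θ
    rw [this, intervalIntegral.integral_add (intervalIntegrable_const)
      (hcont2.intervalIntegrable _ _), meanvalue hinv, intervalIntegral.integral_const,
      max_eq_left hgt.le]
    simp only [smul_eq_mul, sub_zero, add_zero]


lemma countable_exp_eq (c : ℂ) :
    Set.Countable {θ : ℝ | Complex.exp (θ * Complex.I) = c} := by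
  rcases Set.eq_empty_or_nonempty {θ : ℝ | Complex.exp (θ * Complex.I) = c} with h | ⟨θ₀, hθ₀⟩
  · rw [h]; exact Set.countable_empty
  · apply Set.Countable.mono _ (Set.countable_range (fun n : ℤ => θ₀ + n * (2*π)))
    intro θ hθ
    simp only [Set.mem_setOf_eq] at hθ hθ₀
    rw [← hθ₀, Complex.exp_eq_exp_iff_exists_int] at hθ
    obtain ⟨n, hn⟩ := hθ
    refine ⟨n, ?_⟩
    have h2 : (θ : ℂ) * Complex.I = ((θ₀ + n * (2*π) : ℝ) : ℂ) * Complex.I := by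
      rw [hn]; push_cast; ring
    have h3 := mul_right_cancel₀ Complex.I_ne_zero h2
    exact (Complex.ofReal_inj.1 h3).symm

lemma logmax {α β : ℂ} (h : α * β = 1) :
    Real.log (max (‖α‖) 1) + Real.log (max (‖β‖) 1)
      = Real.log (max (‖α‖) (‖β‖))
    ∧ 1 ≤ max (‖α‖) (‖β‖) := by
  have habs : ‖α‖ * ‖β‖ = 1 := by rw [← norm_mul, h, norm_one]
  have hα : 0 ≤ ‖α‖ := norm_nonneg α
  have hβ : 0 ≤ ‖β‖ := norm_nonneg β
  rcases le_total (‖β‖) (‖α‖) with hba | hab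
  · have h1 : 1 ≤ ‖α‖ := by nlinarith
    have h2 : ‖β‖ ≤ 1 := by nlinarith
    rw [max_eq_left h1, max_eq_right h2, max_eq_left hba, Real.log_one, add_zero]
    exact ⟨rfl, h1⟩
  · have h1 : 1 ≤ ‖β‖ := by nlinarith
    have h2 : ‖α‖ ≤ 1 := by nlinarith
    rw [max_eq_right h2, max_eq_left h1, max_eq_right hab, Real.log_one, zero_add]
    exact ⟨rfl, h1⟩

lemma subst_cos (G : ℝ → ℝ) :
    ∫ x in (-1:ℝ)..1, G x / Real.sqrt (1 - x^2) = ∫ θ in (0:ℝ)..π, G (Real.cos θ) := by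
  have hπ := Real.pi_pos
  have himg : Real.cos '' (Set.Ioo 0 π) = Set.Ioo (-1 : ℝ) 1 := by
    apply Set.Subset.antisymm
    · rintro x ⟨θ, hθ, rfl⟩
      constructor
      · have := Real.strictAntiOn_cos ⟨hθ.1.le, hθ.2.le⟩ ⟨hπ.le, le_refl π⟩ hθ.2
        rwa [Real.cos_pi] at this
      · have := Real.strictAntiOn_cos ⟨le_refl 0, hπ.le⟩ ⟨hθ.1.le, hθ.2.le⟩ hθ.1
        rwa [Real.cos_zero] at this
    · rintro x ⟨h1, h2⟩
      rw [Set.mem_image]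
      refine ⟨Real.arccos x, ⟨Real.arccos_pos.2 h2, ?_⟩, Real.cos_arccos h1.le h2.le⟩
      simp only [Real.arccos]
      have := Real.neg_pi_div_two_lt_arcsin.2 h1
      linarith
  have hder : ∀ θ ∈ Set.Ioo (0:ℝ) π,
      HasDerivWithinAt Real.cos (-Real.sin θ) (Set.Ioo 0 π) θ := by
    intro θ _
    exact (Real.hasDerivAt_cos θ).hasDerivWithinAt
  have hinj : Set.InjOn Real.cos (Set.Ioo 0 π) :=
    Real.injOn_cos.mono Set.Ioo_subset_Icc_self
  have h := MeasureTheory.integral_image_eq_integral_abs_deriv_smul measurableSet_Ioo hder hinj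
      (fun x => G x / Real.sqrt (1 - x^2))
  rw [himg] at h
  rw [intervalIntegral.integral_of_le (by norm_num : (-1:ℝ) ≤ 1),
      intervalIntegral.integral_of_le hπ.le,
      MeasureTheory.integral_Ioc_eq_integral_Ioo, MeasureTheory.integral_Ioc_eq_integral_Ioo, h]
  apply MeasureTheory.setIntegral_congr_fun measurableSet_Ioo
  intro θ hθ
  have hs : 0 < Real.sin θ := Real.sin_pos_of_pos_of_lt_pi hθ.1 hθ.2
  have hsq : Real.sqrt (1 - Real.cos θ^2) = Real.sin θ := by
    rw [show 1 - Real.cos θ^2 = Real.sin θ^2 by nlinarith [Real.sin_sq_add_cos_sq θ],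
      Real.sqrt_sq hs.le]
  simp only [smul_eq_mul]
  rw [abs_neg, _root_.abs_of_nonneg hs.le, hsq]
  field_simp

lemma key (z w : ℂ) (hw : w^2 = z^2 - 1) :
    ∫ θ in (0:ℝ)..π, Real.log (‖(Real.cos θ : ℂ) - z‖)
      = π * Real.log (max (‖z+w‖) (‖z-w‖) / 2) := by
  have hπ := Real.pi_pos
  set α := z + w with hα
  set β := z - w with hβ
  have hαβ : α * β = 1 := by rw [hα, hβ]; linear_combination -hw
  set f : ℝ → ℝ := fun θ => Real.log (‖(Real.cos θ : ℂ) - z‖) with hf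
  set F : ℝ → ℝ := fun θ => fa α θ + fa β θ - Real.log 2 with hF
  set S : Set ℝ := {θ : ℝ | Complex.exp (θ * Complex.I) = α}
      ∪ {θ : ℝ | Complex.exp (θ * Complex.I) = β} with hS
  have hSc : S.Countable := (countable_exp_eq α).union (countable_exp_eq β)
  have hae : ∀ᵐ θ : ℝ, θ ∉ S := by
    rw [MeasureTheory.ae_iff]
    simp only [not_not]
    exact hSc.measure_zero _
  -- key pointwise identity
  have habs : ∀ θ : ℝ, ‖(Real.cos θ : ℂ) - z‖
      = ‖Complex.exp (θ * Complex.I) - α‖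
        * ‖Complex.exp (θ * Complex.I) - β‖ / 2 := by
    intro θ
    set E := Complex.exp (θ * Complex.I) with hE
    have hEne : E ≠ 0 := Complex.exp_ne_zero _
    have hEinv : E + E⁻¹ = 2 * (Real.cos θ : ℂ) := by
      rw [Complex.ofReal_cos]
      have h1 : E⁻¹ = Complex.exp (-(θ * Complex.I)) := by
        rw [hE, ← Complex.exp_neg]
      rw [hE, h1, show -((θ:ℂ) * Complex.I) = (-(θ:ℂ)) * Complex.I by ring,
        Complex.exp_mul_I, Complex.exp_mul_I, Complex.cos_neg, Complex.sin_neg]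
      ring
    have hkey : 2 * E * ((Real.cos θ : ℂ) - z) = (E - α) * (E - β) := by
      have h2 : E * E⁻¹ = 1 := mul_inv_cancel₀ hEne
      have h3 : 2 * (Real.cos θ : ℂ) = E + E⁻¹ := hEinv.symm
      calc 2 * E * ((Real.cos θ : ℂ) - z) = E * (2 * (Real.cos θ : ℂ)) - 2 * E * z := by ring
        _ = E * E + E * E⁻¹ - 2 * E * z := by rw [h3]; ring
        _ = E * E + 1 - 2 * E * z := by rw [h2]
        _ = (E - α) * (E - β) := by rw [hα, hβ]; linear_combination hw
    have h4 := congrArg norm hkey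
    rw [norm_mul, norm_mul, norm_mul, Complex.norm_two, hE, Complex.norm_exp_ofReal_mul_I,
      mul_one] at h4
    linarith
  have hfeq : ∀ θ : ℝ, θ ∉ S → f θ = F θ := by
    intro θ hθ
    rw [hS, Set.mem_union] at hθ
    push_neg at hθ
    have hA : ‖Complex.exp (θ * Complex.I) - α‖ ≠ 0 := by
      rw [norm_ne_zero_iff, sub_ne_zero]
      exact hθ.1
    have hB : ‖Complex.exp (θ * Complex.I) - β‖ ≠ 0 := by
      rw [norm_ne_zero_iff, sub_ne_zero]
      exact hθ.2
    rw [hf, hF]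
    simp only
    rw [habs θ, Real.log_div (mul_ne_zero hA hB) two_ne_zero, Real.log_mul hA hB]
    rfl
  have hae2 : f =ᵐ[volume] F := hae.mono hfeq
  have hFII : ∀ c d : ℝ, Set.uIcc c d ⊆ Set.uIcc 0 (2*π) → IntervalIntegrable F volume c d := by
    intro c d hsub
    exact (((B α).1.mono_set hsub).add ((B β).1.mono_set hsub)).sub intervalIntegrable_const
  have hfII : ∀ c d : ℝ, c ≤ d → Set.uIcc c d ⊆ Set.uIcc 0 (2*π) →
      IntervalIntegrable f volume c d := by
    intro c d hcd hsub
    rw [intervalIntegrable_iff_integrableOn_Ioc_of_le hcd]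
    have := (hFII c d hsub)
    rw [intervalIntegrable_iff_integrableOn_Ioc_of_le hcd] at this
    exact this.congr (ae_restrict_of_ae hae2.symm)
  have hsub1 : Set.uIcc (0:ℝ) π ⊆ Set.uIcc 0 (2*π) := by
    apply Set.uIcc_subset_uIcc <;> rw [Set.mem_uIcc] <;> left <;> constructor <;> linarith
  have hsub2 : Set.uIcc π (2*π) ⊆ Set.uIcc 0 (2*π) := by
    apply Set.uIcc_subset_uIcc <;> rw [Set.mem_uIcc] <;> left <;> constructor <;> linarith
  have h2π : ∫ θ in (0:ℝ)..(2*π), f θ = 2*π*Real.log (max (‖α‖) 1)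
      + 2*π*Real.log (max (‖β‖) 1) - 2*π*Real.log 2 := by
    have e1 : ∫ θ in (0:ℝ)..(2*π), f θ = ∫ θ in (0:ℝ)..(2*π), F θ :=
      intervalIntegral.integral_congr_ae (hae2.mono fun x hx _ => hx)
    rw [e1, hF]
    rw [intervalIntegral.integral_sub ((B α).1.add (B β).1) intervalIntegrable_const,
      intervalIntegral.integral_add (B α).1 (B β).1, (B α).2, (B β).2,
      intervalIntegral.integral_const]
    simp only [smul_eq_mul, sub_zero]
    try ring
  have hrefl : ∫ θ in π..(2*π), f θ = ∫ θ in (0:ℝ)..π, f θ := by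
    have h3 := intervalIntegral.integral_comp_sub_left (a := (0:ℝ)) (b := π) f (2*π)
    have heq : ∀ x : ℝ, f (2*π - x) = f x := by
      intro x
      rw [hf]
      simp only
      rw [Real.cos_two_pi_sub]
    simp only [heq] at h3
    rw [show 2*π - π = π by ring, show 2*π - 0 = 2*π by ring] at h3
    exact h3.symm
  have hadd : ∫ θ in (0:ℝ)..(2*π), f θ = (∫ θ in (0:ℝ)..π, f θ) + ∫ θ in π..(2*π), f θ :=
    (intervalIntegral.integral_add_adjacent_intervals
      (hfII 0 π hπ.le hsub1) (hfII π (2*π) (by linarith) hsub2)).symm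
  obtain ⟨hlm, hlm1⟩ := logmax hαβ
  have hmaxne : max (‖α‖) (‖β‖) ≠ 0 := by positivity
  have hlogdiv : Real.log (max (‖α‖) (‖β‖) / 2)
      = Real.log (max (‖α‖) (‖β‖)) - Real.log 2 :=
    Real.log_div hmaxne two_ne_zero
  rw [hrefl] at hadd
  rw [hadd] at h2π
  rw [hlogdiv]
  nlinarith [h2π, hlm]


end ArcsinePot

open ArcsinePot in
/-- The logarithmic potential of the arcsine (equilibrium) measure of `[-1,1]`:
for every `z ∈ ℂ` and square root `w` of `z² - 1`,
`(1/π) ∫_{-1}^{1} log|x - z| / √(1-x²) dx = log( max(|z+w|, |z-w|) / 2 )`;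
in particular the potential is constantly `-log 2` on `[-1,1]`. -/
theorem log_potential_arcsine :
    (∀ z w : ℂ, w ^ 2 = z ^ 2 - 1 →
      (1 / Real.pi) *
          ∫ x in (-1 : ℝ)..1, Real.log ‖(x : ℂ) - z‖ / Real.sqrt (1 - x ^ 2)
        = Real.log (max ‖z + w‖ ‖z - w‖ / 2)) ∧
    (∀ z : ℝ, z ∈ Set.Icc (-1 : ℝ) 1 →
      (1 / Real.pi) *
          ∫ x in (-1 : ℝ)..1, Real.log |x - z| / Real.sqrt (1 - x ^ 2)
        = - Real.log 2) := by
  have hπ := Real.pi_pos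
  have part1 : ∀ z w : ℂ, w ^ 2 = z ^ 2 - 1 →
      (1 / Real.pi) *
          ∫ x in (-1 : ℝ)..1, Real.log (‖(x : ℂ) - z‖) / Real.sqrt (1 - x ^ 2)
        = Real.log (max (‖z + w‖) (‖z - w‖) / 2) := by
    intro z w hw
    have h1 := subst_cos (fun x : ℝ => Real.log (‖(x : ℂ) - z‖))
    rw [h1, key z w hw]
    field_simp
  refine ⟨part1, ?_⟩
  intro z hz
  have hz2 : (0:ℝ) ≤ 1 - z^2 := by nlinarith [hz.1, hz.2]
  set r : ℝ := Real.sqrt (1 - z^2) with hr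
  have hr2 : r^2 = 1 - z^2 := Real.sq_sqrt hz2
  have hw : ((r : ℂ) * Complex.I)^2 = ((z:ℝ) : ℂ)^2 - 1 := by
    rw [mul_pow, Complex.I_sq, ← Complex.ofReal_pow, ← Complex.ofReal_pow, hr2]
    push_cast
    ring
  have h := part1 ((z:ℝ) : ℂ) ((r : ℂ) * Complex.I) hw
  have habs1 : ‖((z:ℝ):ℂ) + (r:ℂ) * Complex.I‖ = 1 := by
    rw [Complex.norm_add_mul_I]
    rw [show z^2 + r^2 = 1 by rw [hr2]; ring]
    exact Real.sqrt_one
  have habs2 : ‖((z:ℝ):ℂ) - (r:ℂ) * Complex.I‖ = 1 := by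
    rw [show ((z:ℝ):ℂ) - (r:ℂ) * Complex.I = ((z:ℝ):ℂ) + ((-r : ℝ):ℂ) * Complex.I by push_cast; ring]
    rw [Complex.norm_add_mul_I]
    rw [show z^2 + (-r)^2 = 1 by rw [show (-r)^2 = r^2 by ring, hr2]; ring]
    exact Real.sqrt_one
  rw [habs1, habs2, max_self] at h
  have hint : (fun x : ℝ => Real.log (‖(x:ℂ) - ((z:ℝ):ℂ)‖) / Real.sqrt (1 - x^2))
      = fun x : ℝ => Real.log |x - z| / Real.sqrt (1 - x^2) := by
    funext x
    rw [show (x:ℂ) - ((z:ℝ):ℂ) = ((x - z : ℝ) : ℂ) by push_cast; ring, Complex.norm_real, Real.norm_eq_abs]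
  rw [hint] at h
  rw [h]
  rw [Real.log_div one_ne_zero two_ne_zero, Real.log_one, zero_sub]
end
end

section
/- For n ≥ 1 an integer and s > 0 a real number, set γ_n(s) := 2 Γ(2n+1) Γ(2n+2s) / ( (2n+s) Γ(2n+s)² ). If 0 < s < 1 then γ_{n+1}(s) > γ_n(s) for every n ≥ 1, and if s > 1 then γ_{n+1}(s) < γ_n(s) for every n ≥ 1. Equivalently, the ratio γ_{n+1}(s)/γ_n(s) = (2n+1)(2n+2)(2n+2s)(2n+2s+1) / ( (2n+s)(2n+s+1)²(2n+s+2) ) is > 1 for 0 < s < 1 and < 1 for s > 1. -/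
private lemma gamma_add_two (a : ℝ) (ha : 0 < a) :
    Real.Gamma (a + 2) = (a + 1) * a * Real.Gamma a := by
  rw [show a + 2 = (a + 1) + 1 by ring, Real.Gamma_add_one (by positivity),
    Real.Gamma_add_one ha.ne']
  ring

theorem gamma_ratio_monotone (s : ℝ) (hs : 0 < s) (γ : ℕ → ℝ)
    (hγ : ∀ n : ℕ, γ n =
      2 * Real.Gamma (2 * (n : ℝ) + 1) * Real.Gamma (2 * (n : ℝ) + 2 * s) /
        ((2 * (n : ℝ) + s) * Real.Gamma (2 * (n : ℝ) + s) ^ 2)) :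
    (s < 1 → ∀ n : ℕ, 1 ≤ n → γ n < γ (n + 1)) ∧
    (1 < s → ∀ n : ℕ, 1 ≤ n → γ (n + 1) < γ n) ∧
    (∀ n : ℕ, 1 ≤ n → γ (n + 1) / γ n =
      (2 * (n : ℝ) + 1) * (2 * (n : ℝ) + 2) * (2 * (n : ℝ) + 2 * s) *
          (2 * (n : ℝ) + 2 * s + 1) /
        ((2 * (n : ℝ) + s) * (2 * (n : ℝ) + s + 1) ^ 2 * (2 * (n : ℝ) + s + 2))) := by
  -- Key facts for each n : γ n > 0 and γ (n+1) = γ n * (N/D).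
  have key : ∀ n : ℕ, 0 < γ n ∧ γ (n + 1) = γ n *
      ((2 * (n : ℝ) + 1) * (2 * (n : ℝ) + 2) * (2 * (n : ℝ) + 2 * s) *
          (2 * (n : ℝ) + 2 * s + 1) /
        ((2 * (n : ℝ) + s) * (2 * (n : ℝ) + s + 1) ^ 2 * (2 * (n : ℝ) + s + 2))) := by
    intro n
    set x : ℝ := (n : ℝ) with hx
    have hx0 : 0 ≤ x := Nat.cast_nonneg n
    have ha : (0:ℝ) < 2 * x + 1 := by linarith
    have hb : (0:ℝ) < 2 * x + 2 * s := by linarith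
    have hc : (0:ℝ) < 2 * x + s := by linarith
    have hΓa := Real.Gamma_pos_of_pos ha
    have hΓb := Real.Gamma_pos_of_pos hb
    have hΓc := Real.Gamma_pos_of_pos hc
    have hpos : 0 < γ n := by
      rw [hγ n]; positivity
    refine ⟨hpos, ?_⟩
    have hA : Real.Gamma (2 * ((n:ℝ) + 1) + 1)
        = (2 * x + 2) * (2 * x + 1) * Real.Gamma (2 * x + 1) := by
      rw [show 2 * ((n:ℝ) + 1) + 1 = (2 * x + 1) + 2 by ring, gamma_add_two _ ha]; ring
    have hB : Real.Gamma (2 * ((n:ℝ) + 1) + 2 * s)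
        = (2 * x + 2 * s + 1) * (2 * x + 2 * s) * Real.Gamma (2 * x + 2 * s) := by
      rw [show 2 * ((n:ℝ) + 1) + 2 * s = (2 * x + 2 * s) + 2 by ring, gamma_add_two _ hb]
    have hC : Real.Gamma (2 * ((n:ℝ) + 1) + s)
        = (2 * x + s + 1) * (2 * x + s) * Real.Gamma (2 * x + s) := by
      rw [show 2 * ((n:ℝ) + 1) + s = (2 * x + s) + 2 by ring, gamma_add_two _ hc]
    have h1 := hγ (n + 1)
    push_cast at h1
    rw [h1, hA, hB, hC, hγ n]
    field_simp
    ring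
  refine ⟨?_, ?_, ?_⟩
  · intro hs1 n hn
    obtain ⟨hpos, heq⟩ := key n
    have hx1 : (1:ℝ) ≤ (n:ℝ) := by exact_mod_cast hn
    set x : ℝ := (n : ℝ)
    have hD : (0:ℝ) < (2 * x + s) * (2 * x + s + 1) ^ 2 * (2 * x + s + 2) := by positivity
    have hND : (2 * x + s) * (2 * x + s + 1) ^ 2 * (2 * x + s + 2) <
        (2 * x + 1) * (2 * x + 2) * (2 * x + 2 * s) * (2 * x + 2 * s + 1) := by
      have hfac : (0:ℝ) < s * (1 - s) * (8*x^2+8*x*(s+1) + s^2 + 5*s + 2) := by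
        have : (0:ℝ) < 8*x^2+8*x*(s+1) + s^2 + 5*s + 2 := by nlinarith
        have := mul_pos (mul_pos hs (by linarith : (0:ℝ) < 1 - s)) this
        linarith
      have hid : (2*x+1)*(2*x+2)*(2*x+2*s)*(2*x+2*s+1)
          - (2*x+s)*(2*x+s+1)^2*(2*x+s+2)
          = s*(1-s)*(8*x^2+8*x*(s+1)+s^2+5*s+2) := by ring
      linarith
    have : 1 < (2 * x + 1) * (2 * x + 2) * (2 * x + 2 * s) * (2 * x + 2 * s + 1) /
        ((2 * x + s) * (2 * x + s + 1) ^ 2 * (2 * x + s + 2)) :=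
      (one_lt_div hD).mpr hND
    calc γ n = γ n * 1 := (mul_one _).symm
      _ < γ (n+1) := by rw [heq]; exact (mul_lt_mul_iff_right₀ hpos).mpr this
  · intro hs1 n hn
    obtain ⟨hpos, heq⟩ := key n
    have hx1 : (1:ℝ) ≤ (n:ℝ) := by exact_mod_cast hn
    set x : ℝ := (n : ℝ)
    have hD : (0:ℝ) < (2 * x + s) * (2 * x + s + 1) ^ 2 * (2 * x + s + 2) := by positivity
    have hND : (2 * x + 1) * (2 * x + 2) * (2 * x + 2 * s) * (2 * x + 2 * s + 1) <
        (2 * x + s) * (2 * x + s + 1) ^ 2 * (2 * x + s + 2) := by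
      have hfac : (0:ℝ) < s * (s - 1) * (8*x^2+8*x*(s+1) + s^2 + 5*s + 2) := by
        have : (0:ℝ) < 8*x^2+8*x*(s+1) + s^2 + 5*s + 2 := by nlinarith
        have := mul_pos (mul_pos hs (by linarith : (0:ℝ) < s - 1)) this
        linarith
      have hid : (2*x+s)*(2*x+s+1)^2*(2*x+s+2)
          - (2*x+1)*(2*x+2)*(2*x+2*s)*(2*x+2*s+1)
          = s*(s-1)*(8*x^2+8*x*(s+1)+s^2+5*s+2) := by ring
      linarith
    have : (2 * x + 1) * (2 * x + 2) * (2 * x + 2 * s) * (2 * x + 2 * s + 1) /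
        ((2 * x + s) * (2 * x + s + 1) ^ 2 * (2 * x + s + 2)) < 1 :=
      (div_lt_one hD).mpr hND
    calc γ (n+1) = γ n * _ := heq
      _ < γ n * 1 := (mul_lt_mul_iff_right₀ hpos).mpr this
      _ = γ n := mul_one _
  · intro n hn
    obtain ⟨hpos, heq⟩ := key n
    rw [heq, mul_comm, mul_div_assoc, div_self hpos.ne', mul_one]
end

section
/- Let m ≥ 1, n ≥ 0 and 0 ≤ l < 2m be integers with N := 2nm + l ≥ 1. Suppose P ∈ ℂ[X] is a monic polynomial of degree N of the form P(z) = z^N + Σ_{k=0}^{n−1} a_k z^{2km + l} with a_0, …, a_{n−1} ∈ ℝ, and that for each k ∈ {0, 1, …, 2m−1} there exist points 0 ≤ x_0 < x_1 < … < x_n ≤ 2^{1/m} and σ_k ∈ ℂ with |σ_k| = 1 such that P(e^{iπk/m} x_j) = σ_k (−1)^j · sup_{z ∈ E_m}|P(z)| for j = 0, 1, …, n. Then P attains the Chebyshev norm: sup_{z ∈ E_m} |P(z)| = t_N(E_m). -/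
set_option maxHeartbeats 1000000

open Polynomial Finset


lemma Estar.zero_mem {m : ℕ} (hm : 1 ≤ m) : (0 : ℂ) ∈ Estar m :=
  ⟨0, by norm_num, by simp [zero_pow (by omega : m ≠ 0)]⟩

lemma Estar.isCompact {m : ℕ} (hm : 1 ≤ m) : IsCompact (Estar m) := by
  have hcl : IsClosed (Estar m) := by
    have : Estar m = (fun z : ℂ => z ^ m) ⁻¹' ((fun x : ℝ => (x : ℂ)) '' Set.Icc (-2) 2) := by
      ext z
      constructor
      · rintro ⟨x, hx, hxz⟩; exact ⟨x, hx, hxz⟩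
      · rintro ⟨x, hx, hxz⟩; exact ⟨x, hx, hxz⟩
    rw [this]
    exact ((isCompact_Icc.image Complex.continuous_ofReal).isClosed).preimage (continuous_pow m)
  refine (isCompact_closedBall (0:ℂ) 2).of_isClosed_subset hcl ?_
  rintro z ⟨x, hx, hxz⟩
  simp only [Metric.mem_closedBall, dist_zero_right]
  by_contra hz
  push_neg at hz
  have h1 : (1:ℝ) ≤ ‖z‖ := by linarith
  have h2 : ‖z‖ ≤ ‖z‖ ^ m := le_self_pow₀ h1 (by omega)
  have h3 : ‖z ^ m‖ = |x| := by rw [← hxz]; simp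
  have h4 : |x| ≤ 2 := abs_le.2 ⟨hx.1, hx.2⟩
  rw [norm_pow] at h3
  nlinarith

lemma Estar.sup_spec {m : ℕ} (hm : 1 ≤ m) (R : Polynomial ℂ) :
    (∀ z ∈ Estar m, ‖R.eval z‖ ≤ ⨆ z ∈ Estar m, ‖R.eval z‖) ∧
    0 ≤ (⨆ z ∈ Estar m, ‖R.eval z‖) ∧
    ∀ C : ℝ, 0 ≤ C → (∀ z ∈ Estar m, ‖R.eval z‖ ≤ C) →
      (⨆ z ∈ Estar m, ‖R.eval z‖) ≤ C := by
  set f : ℂ → ℝ := fun z => ‖R.eval z‖ with hf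
  obtain ⟨z₀, hz₀, hmax⟩ := (Estar.isCompact hm).exists_isMaxOn ⟨0, Estar.zero_mem hm⟩
    ((continuous_norm.comp (Polynomial.continuous R)).continuousOn)
  have hf0 : 0 ≤ f z₀ := norm_nonneg _
  have hb : ∀ z : ℂ, (⨆ _ : z ∈ Estar m, f z) ≤ f z₀ := by
    intro z
    by_cases hz : z ∈ Estar m
    · rw [ciSup_pos hz]; exact hmax hz
    · haveI : IsEmpty (z ∈ Estar m) := ⟨hz⟩
      rw [Real.iSup_of_isEmpty]; exact hf0
  have hbdd : BddAbove (Set.range fun z => ⨆ _ : z ∈ Estar m, f z) :=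
    ⟨f z₀, by rintro r ⟨z, rfl⟩; exact hb z⟩
  have hup : ∀ z ∈ Estar m, f z ≤ ⨆ z ∈ Estar m, f z := by
    intro z hz
    have := le_ciSup hbdd z
    rwa [ciSup_pos hz] at this
  refine ⟨hup, le_trans (norm_nonneg _) (hup 0 (Estar.zero_mem hm)), ?_⟩
  intro C hC h
  refine ciSup_le fun z => ?_
  by_cases hz : z ∈ Estar m
  · rw [ciSup_pos hz]; exact h z hz
  · haveI : IsEmpty (z ∈ Estar m) := ⟨hz⟩
    rw [Real.iSup_of_isEmpty]; exact hC

lemma Estar.ray_mem {m : ℕ} (hm : 1 ≤ m) (k : ℕ) {x : ℝ}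
    (hx : x ∈ Set.Icc (0:ℝ) ((2:ℝ) ^ ((1:ℝ)/(m:ℝ)))) :
    (Complex.exp (2 * Real.pi * Complex.I / ((2*m : ℕ) : ℂ)))^k * (x:ℂ) ∈ Estar m := by
  have hm0 : (m:ℝ) ≠ 0 := Nat.cast_ne_zero.2 (by omega)
  have hxm2 : x ^ m ≤ 2 := by
    calc x ^ m ≤ ((2:ℝ) ^ ((1:ℝ)/(m:ℝ))) ^ m := pow_le_pow_left₀ hx.1 hx.2 m
    _ = 2 := by
        rw [← Real.rpow_natCast ((2:ℝ) ^ ((1:ℝ)/(m:ℝ))) m, ← Real.rpow_mul (by norm_num)]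
        rw [one_div, inv_mul_cancel₀ hm0, Real.rpow_one]
  have hxm0 : 0 ≤ x ^ m := pow_nonneg hx.1 m
  have homega : (Complex.exp (2 * Real.pi * Complex.I / ((2*m : ℕ) : ℂ))) ^ m = -1 := by
    rw [← Complex.exp_nat_mul]
    have : (m:ℂ) * (2 * Real.pi * Complex.I / ((2*m : ℕ) : ℂ)) = Real.pi * Complex.I := by
      have hm0c : (m:ℂ) ≠ 0 := Nat.cast_ne_zero.2 (by omega)
      push_cast
      field_simp
    rw [this, Complex.exp_pi_mul_I]
  refine ⟨(-1)^k * x^m, ?_, ?_⟩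
  · rcases Nat.even_or_odd k with hk | hk
    · rw [hk.neg_one_pow]; constructor <;> nlinarith
    · rw [hk.neg_one_pow]; constructor <;> nlinarith
  · rw [mul_pow, ← pow_mul, mul_comm k m, pow_mul, homega]
    push_cast
    ring

lemma mod_eq_iff_dvd {m l j : ℕ} (hl : l < 2*m) :
    j % (2*m) = l ↔ (2*m) ∣ (2*m - l + j) := by
  have hle : l ≤ j + 2*m := by omega
  have he : 2*m - l + j = (j + 2*m) - l := by omega
  rw [he, ← Nat.modEq_iff_dvd' hle]
  unfold Nat.ModEq
  rw [Nat.add_mod_right, Nat.mod_eq_of_lt hl]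
  exact comm

lemma filter_eq_image {m n l N : ℕ} (hm : 1 ≤ m) (hl : l < 2*m) (hN : N = 2*n*m + l) :
    (range (N+1)).filter (fun j => (2*m) ∣ (2*m - l + j)) =
      (range (n+1)).image (fun t => 2*t*m + l) := by
  ext j
  simp only [mem_filter, mem_range, mem_image]
  constructor
  · rintro ⟨hj, hdvd⟩
    have hmod : j % (2*m) = l := (mod_eq_iff_dvd hl).mpr hdvd
    have hd := Nat.div_add_mod j (2*m)
    rw [hmod] at hd
    set t := j / (2*m) with hts
    have hjt : j = 2*m*t + l := by omega
    have h5 : 2*m*t ≤ 2*m*n := by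
      have h3 : 2*n*m = 2*m*n := by ring
      have hj2 : j ≤ 2*n*m + l := by omega
      linarith
    have htn : t ≤ n := Nat.le_of_mul_le_mul_left h5 (by omega)
    exact ⟨t, by omega, by rw [hjt]; ring⟩
  · rintro ⟨t, ht, rfl⟩
    have h1 : (2*t)*m ≤ (2*n)*m :=
      Nat.mul_le_mul_right m (Nat.mul_le_mul_left 2 (Nat.lt_succ_iff.mp ht))
    have h2 : 2*m*(1+t) = 2*m + 2*t*m := by ring
    constructor
    · generalize 2*t*m = A at h1 ⊢
      generalize 2*n*m = B at h1 hN
      omega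
    · exact ⟨1+t, by rw [h2]; generalize 2*t*m = A; omega⟩

lemma claimA {m n l N : ℕ} (hm : 1 ≤ m) (hl : l < 2*m) (hN : N = 2*n*m + l)
    (Q : Polynomial ℂ) (hQd : Q.natDegree = N) (x : ℂ) :
    ∑ k ∈ range (2*m), (Complex.exp (2 * Real.pi * Complex.I / ((2*m:ℕ):ℂ)))^(k*(2*m-l)) *
        Q.eval ((Complex.exp (2 * Real.pi * Complex.I / ((2*m:ℕ):ℂ)))^k * x)
      = ((2*m : ℕ) : ℂ) * ∑ t ∈ range (n+1), Q.coeff (2*t*m + l) * x^(2*t*m+l) := by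
  set ω := Complex.exp (2 * Real.pi * Complex.I / ((2*m:ℕ):ℂ)) with hω
  have hprim : IsPrimitiveRoot ω (2*m) := Complex.isPrimitiveRoot_exp (2*m) (by omega)
  have hev : ∀ k, Q.eval (ω^k * x) = ∑ j ∈ range (N+1), Q.coeff j * (ω^(k*j) * x^j) := by
    intro k
    rw [Polynomial.eval_eq_sum_range, hQd]
    exact Finset.sum_congr rfl fun j _ => by rw [mul_pow, ← pow_mul]
  have step1 : ∑ k ∈ range (2*m), ω^(k*(2*m-l)) * Q.eval (ω^k * x)
      = ∑ j ∈ range (N+1), (Q.coeff j * x^j) * ∑ k ∈ range (2*m), (ω^(2*m-l+j))^k := by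
    have : ∀ k ∈ range (2*m), ω^(k*(2*m-l)) * Q.eval (ω^k * x)
        = ∑ j ∈ range (N+1), (Q.coeff j * x^j) * (ω^(2*m-l+j))^k := by
      intro k _
      rw [hev k, Finset.mul_sum]
      refine Finset.sum_congr rfl fun j _ => ?_
      rw [← pow_mul, Nat.add_mul, pow_add, Nat.mul_comm (2*m-l) k, Nat.mul_comm j k]
      ring
    rw [Finset.sum_congr rfl this, Finset.sum_comm]
    exact Finset.sum_congr rfl fun j _ => (Finset.mul_sum _ _ _).symm
  rw [step1]
  have step2 : ∀ j ∈ range (N+1), (Q.coeff j * x^j) * ∑ k ∈ range (2*m), (ω^(2*m-l+j))^k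
      = (Q.coeff j * x^j) * (if (2*m) ∣ (2*m-l+j) then ((2*m:ℕ):ℂ) else 0) := by
    intro j _
    congr 1
    by_cases hdvd : (2*m) ∣ (2*m-l+j)
    · rw [if_pos hdvd, (hprim.pow_eq_one_iff_dvd _).mpr hdvd]
      simp
    · rw [if_neg hdvd]
      have hne : ω^(2*m-l+j) ≠ 1 := fun h => hdvd ((hprim.pow_eq_one_iff_dvd _).mp h)
      rw [geom_sum_eq hne]
      have : (ω^(2*m-l+j))^(2*m) = 1 := by
        rw [← pow_mul, mul_comm, pow_mul, hprim.pow_eq_one, one_pow]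
      rw [this, sub_self, zero_div]
  rw [Finset.sum_congr rfl step2]
  have step3 : ∑ j ∈ range (N+1), (Q.coeff j * x^j) * (if (2*m) ∣ (2*m-l+j) then ((2*m:ℕ):ℂ) else 0)
      = ∑ j ∈ (range (N+1)).filter (fun j => (2*m) ∣ (2*m-l+j)), (Q.coeff j * x^j) * ((2*m:ℕ):ℂ) := by
    rw [Finset.sum_filter]
    refine Finset.sum_congr rfl fun j _ => ?_
    by_cases hdvd : (2*m) ∣ (2*m-l+j) <;> simp [hdvd]
  rw [step3, filter_eq_image hm hl hN, Finset.sum_image ?hinj]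
  case hinj =>
    intro t _ t' _ h
    have : 2*t*m = 2*t'*m := by simp only at h; omega
    have h2 : t * (2*m) = t' * (2*m) := by
      rw [show t*(2*m) = 2*t*m by ring, show t'*(2*m) = 2*t'*m by ring, this]
    exact Nat.eq_of_mul_eq_mul_right (by omega) h2
  rw [Finset.mul_sum]
  exact Finset.sum_congr rfl fun t _ => by ring

lemma degree_aux {n : ℕ} (c : Fin n → ℝ) :
    (∑ k : Fin n, Polynomial.C (c k) * Polynomial.X ^ (k:ℕ) : Polynomial ℝ).degree < n := by
  refine lt_of_le_of_lt (Polynomial.degree_sum_le _ _) ?_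
  rw [Finset.sup_lt_iff (by exact_mod_cast WithBot.bot_lt_coe n)]
  intro k _
  refine lt_of_le_of_lt (Polynomial.degree_C_mul_X_pow_le _ _) ?_
  exact_mod_cast Nat.cast_lt.mpr k.2

lemma monic_aux {n : ℕ} (c : Fin n → ℝ) :
    (Polynomial.X^n + ∑ k : Fin n, Polynomial.C (c k) * Polynomial.X ^ (k:ℕ) : Polynomial ℝ).Monic :=
  Polynomial.monic_X_pow_add (degree_aux c)

lemma degree_aux2 {n : ℕ} (c : Fin n → ℝ) :
    (Polynomial.X^n + ∑ k : Fin n, Polynomial.C (c k) * Polynomial.X ^ (k:ℕ) : Polynomial ℝ).degree = n := by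
  rw [Polynomial.degree_add_eq_left_of_degree_lt, Polynomial.degree_X_pow]
  rw [Polynomial.degree_X_pow]; exact degree_aux c

/-- Sufficiency part of the alternation characterisation of Chebyshev
polynomials of the star `E_m`. -/
theorem chebyshev_Estar_alternation_sufficient
    (m n l : ℕ) (hm : 1 ≤ m) (hl : l < 2 * m)
    (N : ℕ) (hN : N = 2 * n * m + l) (hN1 : 1 ≤ N)
    (P : Polynomial ℂ) (a : Fin n → ℝ)
    (hform : P = Polynomial.X ^ N +
      ∑ k : Fin n, Polynomial.C ((a k : ℝ) : ℂ) * Polynomial.X ^ (2 * (k : ℕ) * m + l))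
    (halt : ∀ k : ℕ, k < 2 * m → ∃ x : Fin (n + 1) → ℝ, StrictMono x ∧
      (∀ j, x j ∈ Set.Icc (0 : ℝ) ((2 : ℝ) ^ ((1 : ℝ) / (m : ℝ)))) ∧
      ∃ σ : ℂ, ‖σ‖ = 1 ∧ ∀ j : Fin (n + 1),
        P.eval (Complex.exp (Real.pi * (k : ℂ) * Complex.I / (m : ℂ)) * (x j : ℂ))
          = σ * (-1) ^ (j : ℕ) *
              ((⨆ z ∈ Estar m, ‖P.eval z‖ : ℝ) : ℂ)) :
    (⨆ z ∈ Estar m, ‖P.eval z‖) = chebNorm (Estar m) N := by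

  -- degree facts for P
  have hdegS : (∑ k : Fin n, Polynomial.C ((a k : ℝ) : ℂ) *
      Polynomial.X ^ (2 * (k : ℕ) * m + l) : Polynomial ℂ).degree < N := by
    refine lt_of_le_of_lt (Polynomial.degree_sum_le _ _) ?_
    rw [Finset.sup_lt_iff (by exact_mod_cast WithBot.bot_lt_coe N)]
    intro k _
    refine lt_of_le_of_lt (Polynomial.degree_C_mul_X_pow_le _ _) ?_
    have : 2 * (k:ℕ) * m + l < N := by
      have h1 : (2*(k:ℕ))*m < (2*n)*m := by
        have hk := k.2
        exact Nat.mul_lt_mul_of_lt_of_le (by omega) (le_refl m) (by omega)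
      generalize 2*(k:ℕ)*m = A at h1 ⊢
      generalize 2*n*m = B at h1 hN
      omega
    exact_mod_cast Nat.cast_lt.mpr this
  have hPmonic : P.Monic := by
    rw [hform]; exact Polynomial.monic_X_pow_add hdegS
  have hPdeg : P.natDegree = N := by
    rw [hform]
    have : (Polynomial.X ^ N + ∑ k : Fin n, Polynomial.C ((a k : ℝ) : ℂ) *
        Polynomial.X ^ (2 * (k : ℕ) * m + l) : Polynomial ℂ).degree = N := by
      rw [Polynomial.degree_add_eq_left_of_degree_lt, Polynomial.degree_X_pow]
      rw [Polynomial.degree_X_pow]; exact hdegS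
    exact Polynomial.natDegree_eq_of_degree_eq_some this
  set M : ℝ := ⨆ z ∈ Estar m, ‖P.eval z‖ with hM
  obtain ⟨hPub, hPnn, hPle⟩ := Estar.sup_spec hm P
  -- chebNorm ≤ M
  have hle1 : chebNorm (Estar m) N ≤ M := by
    refine csInf_le ⟨0, ?_⟩ ⟨P, hPmonic, hPdeg, rfl⟩
    rintro r ⟨Q, hQm, hQd, rfl⟩
    exact (Estar.sup_spec hm Q).2.1
  -- M ≤ chebNorm
  have hle2 : M ≤ chebNorm (Estar m) N := by
    refine le_csInf ⟨M, P, hPmonic, hPdeg, rfl⟩ ?_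
    rintro r ⟨Q, hQm, hQd, rfl⟩
    set MQ : ℝ := ⨆ z ∈ Estar m, ‖Q.eval z‖ with hMQ
    obtain ⟨hQub, hQnn, hQle⟩ := Estar.sup_spec hm Q
    by_contra hlt
    push_neg at hlt
    have hM0 : 0 < M := lt_of_le_of_lt hQnn hlt
    -- the alternation data on the ray k = 0
    obtain ⟨x, hxmono, hxIcc, σ, hσ, hPx⟩ := halt 0 (by omega)
    simp only [Nat.cast_zero, mul_zero, zero_mul, zero_div, Complex.exp_zero, one_mul] at hPx
    set ω : ℂ := Complex.exp (2 * Real.pi * Complex.I / ((2*m:ℕ):ℂ)) with hω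
    have habsω : ‖ω‖ = 1 := by
      have h : ω = Complex.exp (((2*Real.pi/(2*m):ℝ):ℂ) * Complex.I) := by
        rw [hω]; congr 1; push_cast; ring
      rw [h, Complex.norm_exp_ofReal_mul_I]
    set b : Fin n → ℝ := fun k => (Q.coeff (2*(k:ℕ)*m+l)).re with hb
    set pR : Polynomial ℝ := Polynomial.X^n + ∑ k : Fin n, Polynomial.C (a k) * Polynomial.X^(k:ℕ) with hpR
    set qR : Polynomial ℝ := Polynomial.X^n + ∑ k : Fin n, Polynomial.C (b k) * Polynomial.X^(k:ℕ) with hqR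
    have hpow : ∀ (y:ℂ) (k:ℕ), y^l * (y^(2*m))^k = y^(2*k*m+l) := fun y k => by
      rw [← pow_mul, ← pow_add, show l + 2*m*k = 2*k*m+l by ring]
    have hpowR : ∀ (y:ℝ) (k:ℕ), y^l * (y^(2*m))^k = y^(2*k*m+l) := fun y k => by
      rw [← pow_mul, ← pow_add, show l + 2*m*k = 2*k*m+l by ring]
    have hgP : ∀ t : ℝ, P.eval (t:ℂ) = ((t^l * pR.eval (t^(2*m)) : ℝ) : ℂ) := by
      intro t
      rw [hform, hpR]
      simp only [Polynomial.eval_add, Polynomial.eval_pow, Polynomial.eval_finset_sum,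
        Polynomial.eval_mul, Polynomial.eval_C, Polynomial.eval_X]
      push_cast
      rw [mul_add, Finset.mul_sum]
      congr 1
      · rw [hpow, hN]
      · exact Finset.sum_congr rfl fun k _ => by rw [← hpow (t:ℂ) (k:ℕ)]; ring
    set G : Fin (n+1) → ℝ := fun j => (x j)^l * pR.eval ((x j)^(2*m)) with hG
    have hGx : ∀ j, ((G j : ℝ):ℂ) = σ * (-1)^(j:ℕ) * (M:ℂ) := by
      intro j
      rw [hG, ← hgP]
      exact hPx j
    have habsG : ∀ j, |G j| = M := by
      intro j
      have h := congrArg norm (hGx j)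
      have hn1 : ‖(-1:ℂ)‖ = 1 := by simp
      rw [Complex.norm_real, Real.norm_eq_abs, norm_mul, norm_mul, hσ, norm_pow, hn1, one_pow,
        Complex.norm_real, Real.norm_eq_abs, one_mul, one_mul, abs_of_nonneg hM0.le] at h
      exact h
    have hMne : (M:ℂ) ≠ 0 := by exact_mod_cast hM0.ne'
    have hσval : σ = ((G 0 / M : ℝ) : ℂ) := by
      have h0 := hGx 0
      have h00 : ((0:Fin (n+1)):ℕ) = 0 := rfl
      rw [h00, pow_zero, mul_one] at h0
      push_cast
      rw [eq_div_iff hMne]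
      exact h0.symm
    have hG0sq : (G 0)^2 = M^2 := by rw [← sq_abs (G 0), habsG 0]
    have hσsq : σ^2 = 1 := by
      rw [hσval]
      have : ((G 0 / M : ℝ) : ℂ)^2 = (((G 0 / M)^2 : ℝ) : ℂ) := by push_cast; ring
      rw [this, div_pow, hG0sq, div_self (pow_ne_zero 2 hM0.ne')]
      norm_num
    have hGprod : ∀ j : Fin n, G j.castSucc * G j.succ = -M^2 := by
      intro j
      have h1 := hGx j.castSucc
      have h2 := hGx j.succ
      rw [Fin.coe_castSucc] at h1
      rw [Fin.val_succ] at h2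
      have hneg : ((-1:ℂ)^(j:ℕ))^2 = 1 := by
        rw [← pow_mul, mul_comm, pow_mul]; norm_num
      have hc : ((G j.castSucc * G j.succ : ℝ) : ℂ) = ((-M^2 : ℝ) : ℂ) := by
        push_cast
        rw [h1, h2]
        calc σ * (-1)^(j:ℕ) * (M:ℂ) * (σ * (-1)^((j:ℕ)+1) * (M:ℂ))
            = (σ^2) * (((-1:ℂ)^(j:ℕ))^2) * (-1) * (M:ℂ)^2 := by ring
        _ = -(M:ℂ)^2 := by rw [hσsq, hneg]; ring
      exact_mod_cast hc
    -- bound on the symmetrised polynomial along the positive ray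
    have hQb : ∀ t : ℝ, t ∈ Set.Icc (0:ℝ) ((2:ℝ)^((1:ℝ)/(m:ℝ))) →
        |t^l * qR.eval (t^(2*m))| ≤ MQ := by
      intro t ht
      have hca := claimA hm hl hN Q hQd (t:ℂ)
      set S : ℂ := ∑ u ∈ Finset.range (n+1), Q.coeff (2*u*m + l) * (t:ℂ)^(2*u*m+l) with hS
      have h2m0 : (0:ℝ) < 2*m := by
        have : (1:ℝ) ≤ (m:ℝ) := by exact_mod_cast hm
        linarith
      have hSabs : ‖S‖ ≤ MQ := by
        have habs2 : ‖((2*m:ℕ):ℂ) * S‖ ≤ (2*m) * MQ := by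
          rw [← hca]
          refine le_trans (norm_sum_le _ _) ?_
          have hterm : ∀ k ∈ Finset.range (2*m),
              ‖ω^(k*(2*m-l)) * Q.eval (ω^k * (t:ℂ))‖ ≤ MQ := by
            intro k _
            rw [norm_mul, norm_pow, habsω, one_pow, one_mul]
            exact hQub _ (Estar.ray_mem hm k ht)
          refine le_trans (Finset.sum_le_sum hterm) ?_
          rw [Finset.sum_const, Finset.card_range, nsmul_eq_mul]
          push_cast
          exact le_refl _
        rw [norm_mul, Complex.norm_natCast] at habs2
        push_cast at habs2
        exact le_of_mul_le_mul_left habs2 h2m0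
      have hSre : S.re = t^l * qR.eval (t^(2*m)) := by
        rw [hS, Complex.re_sum]
        have hterm : ∀ u, (Q.coeff (2*u*m+l) * (t:ℂ)^(2*u*m+l)).re
            = (Q.coeff (2*u*m+l)).re * t^(2*u*m+l) := by
          intro u
          rw [← Complex.ofReal_pow, Complex.mul_re, Complex.ofReal_re, Complex.ofReal_im]
          ring
        rw [Finset.sum_congr rfl fun u _ => hterm u]
        rw [Finset.sum_range_succ]
        have htop : (Q.coeff (2*n*m+l)).re = 1 := by
          rw [← hN, ← hQd, Polynomial.Monic.coeff_natDegree hQm]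
          simp
        rw [htop, one_mul]
        rw [hqR]
        simp only [Polynomial.eval_add, Polynomial.eval_pow, Polynomial.eval_finset_sum,
          Polynomial.eval_mul, Polynomial.eval_C, Polynomial.eval_X]
        rw [mul_add, Finset.mul_sum, hpowR t n, ← hN, add_comm]
        congr 1
        rw [← Fin.sum_univ_eq_sum_range (fun k => (Q.coeff (2*k*m+l)).re * t^(2*k*m+l)) n]
        refine Finset.sum_congr rfl fun k _ => ?_
        simp only [hb]
        rw [← hpowR t (k:ℕ)]
        ring
      calc |t^l * qR.eval (t^(2*m))| = |S.re| := by rw [hSre]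
      _ ≤ ‖S‖ := Complex.abs_re_le_norm S
      _ ≤ MQ := hSabs
    -- difference polynomial and its zeros
    set D : Polynomial ℝ := pR - qR with hD
    set F : ℝ → ℝ := fun t => t^l * D.eval (t^(2*m)) with hF
    have hFx : ∀ j : Fin (n+1), F (x j) = G j - (x j)^l * qR.eval ((x j)^(2*m)) := by
      intro j
      rw [hF, hG, hD]
      simp only [Polynomial.eval_sub]
      ring
    have hcont : Continuous F := by
      rw [hF]
      exact (continuous_pow l).mul ((Polynomial.continuous D).comp (continuous_pow (2*m)))
    have hsign : ∀ j : Fin n, F (x j.castSucc) < 0 ∧ 0 < F (x j.succ) ∨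
        0 < F (x j.castSucc) ∧ F (x j.succ) < 0 := by
      intro j
      have hA := hQb (x j.castSucc) (hxIcc _)
      have hB := hQb (x j.succ) (hxIcc _)
      rw [abs_le] at hA hB
      have h1 := habsG j.castSucc
      have h2 := habsG j.succ
      have h3 := hGprod j
      rw [hFx, hFx]
      rcases (abs_eq hM0.le).mp h1 with hu | hu
      · right
        have hv : G j.succ = -M := by
          have h4 : M * G j.succ = M * (-M) := by linear_combination h3 - G j.succ * hu
          exact mul_left_cancel₀ hM0.ne' h4
        constructor
        · rw [hu]; linarith [hA.2]
        · rw [hv]; linarith [hB.1]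
      · left
        have hv : G j.succ = M := by
          have h4 : M * G j.succ = M * M := by linear_combination G j.succ * hu - h3
          exact mul_left_cancel₀ hM0.ne' h4
        constructor
        · rw [hu]; linarith [hA.1]
        · rw [hv]; linarith [hB.2]
    have hzero : ∀ j : Fin n, ∃ t : ℝ, x j.castSucc < t ∧ t < x j.succ ∧ F t = 0 := by
      intro j
      have hxlt : x j.castSucc < x j.succ := hxmono (Fin.castSucc_lt_succ (i := j))
      rcases hsign j with ⟨hc, hs⟩ | ⟨hc, hs⟩
      · have : (0:ℝ) ∈ Set.Ioo (F (x j.castSucc)) (F (x j.succ)) := ⟨hc, hs⟩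
        have himg := intermediate_value_Ioo hxlt.le hcont.continuousOn this
        obtain ⟨t, ht, hFt⟩ := himg
        exact ⟨t, ht.1, ht.2, hFt⟩
      · have : (0:ℝ) ∈ Set.Ioo (F (x j.succ)) (F (x j.castSucc)) := ⟨hs, hc⟩
        have himg := intermediate_value_Ioo' hxlt.le hcont.continuousOn this
        obtain ⟨t, ht, hFt⟩ := himg
        exact ⟨t, ht.1, ht.2, hFt⟩
    choose t ht1 ht2 ht3 using hzero
    have htpos : ∀ j : Fin n, 0 < t j := fun j =>
      lt_of_le_of_lt (hxIcc j.castSucc).1 (ht1 j)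
    have hD0 : D = 0 := by
      rcases Nat.eq_zero_or_pos n with hn0 | hn0
      · rw [hD, hpR, hqR]
        subst hn0
        simp
      · by_cases hDz : D = 0
        · exact hDz
        · have hts : StrictMono (fun j : Fin n => (t j)^(2*m)) := by
            intro j j' hjj
            have hstep : t j < t j' := by
              have h1 : t j < x j.succ := ht2 j
              have h2 : x j.succ ≤ x j'.castSucc := by
                apply hxmono.monotone
                rw [Fin.le_def, Fin.val_succ, Fin.coe_castSucc]
                exact hjj
              exact lt_of_lt_of_le (lt_of_lt_of_le h1 h2) (le_of_lt (ht1 j'))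
            exact pow_lt_pow_left₀ hstep (htpos j).le (by omega)
          refine Polynomial.eq_zero_of_natDegree_lt_card_of_eval_eq_zero D
            hts.injective (fun j => ?_) ?_
          · have hFt := ht3 j
            rw [hF] at hFt
            have hl0 : (t j)^l ≠ 0 := pow_ne_zero l (htpos j).ne'
            exact (mul_eq_zero.mp hFt).resolve_left hl0
          · rw [Fintype.card_fin]
            have hpd : pR.degree = (n : WithBot ℕ) := by rw [hpR]; exact degree_aux2 a
            have hqd : qR.degree = (n : WithBot ℕ) := by rw [hqR]; exact degree_aux2 b
            have hpm : pR.Monic := by rw [hpR]; exact monic_aux a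
            have hqm : qR.Monic := by rw [hqR]; exact monic_aux b
            have hdd : D.degree < (n : WithBot ℕ) := by
              rw [hD]
              have := Polynomial.degree_sub_lt (hpd.trans hqd.symm) hpm.ne_zero
                (by rw [hpm.leadingCoeff, hqm.leadingCoeff])
              rwa [hpd] at this
            exact (Polynomial.natDegree_lt_iff_degree_lt hDz).mpr hdd
    have hF0 : F (x 0) = 0 := by rw [hF, hD0]; simp
    have hfinal := hFx 0
    rw [hF0] at hfinal
    have hGq : G 0 = (x 0)^l * qR.eval ((x 0)^(2*m)) := by linarith
    have hle := hQb (x 0) (hxIcc 0)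
    rw [← hGq] at hle
    rw [habsG 0] at hle
    linarith
  linarith
end
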